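/- arXiv:2002.01959 — 9 statements merged into one kernel-verified Lean document; each statement's English description precedes it below -/
import Mathlib

section
/- Let H be a Hilbert space, V_1, ..., V_n vector spaces, and T_k : H → V_k linear operators for k = 1, ..., n. If for arbitrary elements v_1 ∈ Ran(T_1), ..., v_n ∈ Ran(T_n) there exists x ∈ H with T_k x = v_k for all k, then the system of closed subspaces (ker T_1)^⊥, ..., (ker T_n)^⊥ possesses the inverse best approximation property. -/
noncomputable def orthProjCLM {𝕜 H : Type*} [RCLike 𝕜] [NormedAddCommGroup H]
    [InnerProductSpace 𝕜 H] [CompleteSpace H] (K : Submodule 𝕜 H)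
    (hK : IsClosed (K : Set H)) : H →L[𝕜] H :=
  haveI : CompleteSpace K := hK.completeSpace_coe
  K.subtypeL.comp (K.orthogonalProjectionOnto)

/-- The system of closed subspaces `K 0, ..., K (n-1)` possesses the
inverse best approximation property: for arbitrary `x i ∈ K i` there is `y`
whose orthogonal projection onto each `K i` equals `x i`. -/
def IBAP {𝕜 H : Type*} [RCLike 𝕜] [NormedAddCommGroup H] [InnerProductSpace 𝕜 H]
    [CompleteSpace H] {n : ℕ} (K : Fin n → Submodule 𝕜 H)
    (hK : ∀ i, IsClosed ((K i : Set H))) : Prop :=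
  ∀ x : Fin n → H, (∀ i, x i ∈ K i) →
    ∃ y : H, ∀ i, orthProjCLM (K i) (hK i) y = x i


/-- if the system of equations `T k x = v k` is solvable for all
choices of `v k` in the ranges, then `(ker T 1)ᗮ, ..., (ker T n)ᗮ` has the IBAP. -/
theorem stmt_1 {𝕜 H : Type*} [RCLike 𝕜] [NormedAddCommGroup H]
    [InnerProductSpace 𝕜 H] [CompleteSpace H] {n : ℕ}
    (V : Fin n → Type*) [∀ k, AddCommGroup (V k)] [∀ k, Module 𝕜 (V k)]
    (T : ∀ k, H →ₗ[𝕜] V k)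
    (h : ∀ v : ∀ k, V k, (∀ k, v k ∈ LinearMap.range (T k)) →
      ∃ x : H, ∀ k, T k x = v k) :
    IBAP (fun k => (LinearMap.ker (T k))ᗮ)
      (fun k => Submodule.isClosed_orthogonal _) := by
  intro x hx
  obtain ⟨y, hy⟩ := h (fun k => T k (x k)) (fun k => ⟨x k, rfl⟩)
  refine ⟨y, fun k => ?_⟩
  have hker : y - x k ∈ LinearMap.ker (T k) := by
    simp [LinearMap.mem_ker, map_sub, hy k]
  haveI : CompleteSpace ((LinearMap.ker (T k))ᗮ : Submodule 𝕜 H) :=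
    (Submodule.isClosed_orthogonal _).completeSpace_coe
  haveI : Submodule.HasOrthogonalProjection ((LinearMap.ker (T k))ᗮ) :=
    Submodule.HasOrthogonalProjection.ofCompleteSpace _
  have hdecomp : y = (y - x k) + x k := by abel
  simp only [orthProjCLM, ContinuousLinearMap.comp_apply]
  rw [hdecomp, map_add]
  have h1 : Submodule.orthogonalProjectionOnto ((LinearMap.ker (T k))ᗮ) (y - x k) = 0 :=
    Submodule.orthogonalProjectionOnto_apply_of_mem_orthogonal
      ((Submodule.le_orthogonal_orthogonal _) hker)
  rw [h1, zero_add]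
  exact Submodule.starProjection_eq_self_iff.mpr (hx k)
end

section
/- Let H be a Hilbert space and H_1, ..., H_n closed subspaces of H, with P_k the orthogonal projection onto H_k. The following are equivalent: (1) the system H_1, ..., H_n is linearly independent; (2) for arbitrary elements x_1 ∈ H_1, ..., x_n ∈ H_n and every ε > 0 there exists x ∈ H such that ‖P_k x − x_k‖ ≤ ε for all k = 1, ..., n. -/
open scoped InnerProductSpace

/-- the subspaces `K i` are linearly independent iff the system
has the approximate inverse best approximation property. -/
theorem stmt_3 {𝕜 H : Type*} [RCLike 𝕜] [NormedAddCommGroup H]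
    [InnerProductSpace 𝕜 H] [CompleteSpace H] {n : ℕ}
    (K : Fin n → Submodule 𝕜 H) (hK : ∀ i, IsClosed ((K i : Set H))) :
    (∀ x : Fin n → H, (∀ i, x i ∈ K i) → ∑ i, x i = 0 → ∀ i, x i = 0) ↔
      (∀ x : Fin n → H, (∀ i, x i ∈ K i) → ∀ ε : ℝ, 0 < ε →
        ∃ y : H, ∀ i, ‖orthProjCLM (K i) (hK i) y - x i‖ ≤ ε) := by
  haveI : ∀ i, CompleteSpace (K i) := fun i => (hK i).completeSpace_coe
  have hP : ∀ i (y : H), orthProjCLM (K i) (hK i) y = (Submodule.orthogonalProjectionOnto (K i) y : H) :=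
    fun i y => rfl
  constructor
  · -- hard direction
    intro hind x hx ε hε
    haveI : CompleteSpace (PiLp 2 (fun _ : Fin n => H)) :=
      inferInstance
    let T : H →ₗ[𝕜] PiLp 2 (fun _ : Fin n => H) :=
      { toFun := fun y => WithLp.toLp 2 (fun i => (Submodule.orthogonalProjectionOnto (K i) y : H))
        map_add' := by intro a b; ext i; simp [PiLp.add_apply]
        map_smul' := by intro c a; ext i; simp [PiLp.smul_apply] }
    set V : Submodule 𝕜 (PiLp 2 (fun _ : Fin n => H)) :=
      (LinearMap.range T).topologicalClosure with hVdef
    haveI : CompleteSpace V := (Submodule.isClosed_topologicalClosure _).completeSpace_coe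
    let xE : PiLp 2 (fun _ : Fin n => H) := WithLp.toLp 2 x
    set w : PiLp 2 (fun _ : Fin n => H) := xE - (Submodule.orthogonalProjectionOnto V xE : _) with hw
    have hwV : w ∈ Vᗮ := Submodule.sub_starProjection_mem_orthogonal (K := V) xE
    -- the "adjoint" sum vanishes
    have hsum : ∑ i, (Submodule.orthogonalProjectionOnto (K i) (w i) : H) = 0 := by
      have key : ∀ y : H, ⟪∑ i, (Submodule.orthogonalProjectionOnto (K i) (w i) : H), y⟫_𝕜 = 0 := by
        intro y
        have h1 : ⟪w, T y⟫_𝕜 = 0 :=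
          Submodule.inner_left_of_mem_orthogonal
            (Submodule.le_topologicalClosure _ (LinearMap.mem_range_self T y)) hwV
        calc ⟪∑ i, (Submodule.orthogonalProjectionOnto (K i) (w i) : H), y⟫_𝕜
            = ∑ i, ⟪(Submodule.orthogonalProjectionOnto (K i) (w i) : H), y⟫_𝕜 := by
              rw [sum_inner]
          _ = ∑ i, ⟪w i, (Submodule.orthogonalProjectionOnto (K i) y : H)⟫_𝕜 := by
              refine Finset.sum_congr rfl fun i _ => ?_
              exact Submodule.inner_starProjection_left_eq_right (K i) (w i) y
          _ = ⟪w, T y⟫_𝕜 := (PiLp.inner_apply w (T y)).symm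
          _ = 0 := h1
      exact inner_self_eq_zero.mp (key _)
    have hzero : ∀ i, (Submodule.orthogonalProjectionOnto (K i) (w i) : H) = 0 :=
      hind (fun i => (Submodule.orthogonalProjectionOnto (K i) (w i) : H))
        (fun i => SetLike.coe_mem _) hsum
    -- w = 0
    have h2 : ⟪w, xE⟫_𝕜 = 0 := by
      rw [PiLp.inner_apply]
      refine Finset.sum_eq_zero fun i _ => ?_
      have hxi : (Submodule.orthogonalProjectionOnto (K i) (x i) : H) = x i :=
        Submodule.starProjection_eq_self_iff.mpr (hx i)
      calc ⟪w i, xE i⟫_𝕜 = ⟪w i, (Submodule.orthogonalProjectionOnto (K i) (x i) : H)⟫_𝕜 := by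
            rw [hxi]
        _ = ⟪(Submodule.orthogonalProjectionOnto (K i) (w i) : H), x i⟫_𝕜 :=
            (Submodule.inner_starProjection_left_eq_right (K i) (w i) (x i)).symm
        _ = 0 := by rw [hzero i, inner_zero_left]
    have h3 : ⟪w, (Submodule.orthogonalProjectionOnto V xE : PiLp 2 (fun _ : Fin n => H))⟫_𝕜 = 0 :=
      Submodule.inner_left_of_mem_orthogonal (SetLike.coe_mem _) hwV
    have hw0 : w = 0 := by
      have hww : ⟪w, w⟫_𝕜 = 0 := by
        nth_rewrite 2 [hw]
        rw [inner_sub_right, h2, h3, sub_zero]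
      exact inner_self_eq_zero.mp hww
    -- hence xE is in the closure of range T
    have hxV : xE ∈ V := by
      have hxe : xE = (Submodule.orthogonalProjectionOnto V xE : PiLp 2 (fun _ : Fin n => H)) :=
        sub_eq_zero.mp (hw ▸ hw0)
      rw [hxe]; exact SetLike.coe_mem _
    have hxcl : xE ∈ closure ((LinearMap.range T : Submodule 𝕜 _) : Set (PiLp 2 (fun _ : Fin n => H))) := by
      rw [← Submodule.topologicalClosure_coe]; exact hxV
    rw [Metric.mem_closure_iff] at hxcl
    obtain ⟨b, hb, hdist⟩ := hxcl ε hε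
    obtain ⟨y, rfl⟩ := hb
    refine ⟨y, fun i => ?_⟩
    have hsq : ‖T y - xE‖ ^ 2 = ∑ j, ‖(T y - xE) j‖ ^ 2 := PiLp.norm_sq_eq_of_L2 _ _
    have h1 : ‖(T y - xE) i‖ ^ 2 ≤ ‖T y - xE‖ ^ 2 := by
      rw [hsq]
      exact Finset.single_le_sum (f := fun j => ‖(T y - xE) j‖ ^ 2)
        (fun j _ => sq_nonneg _) (Finset.mem_univ i)
    have hcomp : ‖(T y - xE) i‖ ≤ ‖T y - xE‖ := by
      nlinarith [norm_nonneg ((T y - xE) i), norm_nonneg (T y - xE)]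
    have hle : ‖T y - xE‖ ≤ ε := by
      rw [dist_comm, dist_eq_norm] at hdist
      exact le_of_lt hdist
    calc ‖orthProjCLM (K i) (hK i) y - x i‖ = ‖(T y - xE) i‖ := by
          rw [hP]; rfl
      _ ≤ ‖T y - xE‖ := hcomp
      _ ≤ ε := hle
  · -- easy direction
    intro happ x hx hsum i
    set S : ℝ := ∑ j, ‖x j‖ ^ 2 with hS
    set C : ℝ := ∑ j, ‖x j‖ with hCdef
    have hC0 : 0 ≤ C := Finset.sum_nonneg fun j _ => norm_nonneg _
    have hS0 : 0 ≤ S := Finset.sum_nonneg fun j _ => sq_nonneg _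
    have hCε : ∀ ε : ℝ, 0 < ε → S ≤ ε * C := by
      intro ε hε
      obtain ⟨y, hy⟩ := happ x hx ε hε
      have hz : ∑ j, ⟪(Submodule.orthogonalProjectionOnto (K j) y : H), x j⟫_𝕜 = 0 := by
        have he : ∀ j, ⟪(Submodule.orthogonalProjectionOnto (K j) y : H), x j⟫_𝕜 = ⟪y, x j⟫_𝕜 := by
          intro j
          rw [Submodule.coe_orthogonalProjectionOnto_apply, Submodule.inner_starProjection_left_eq_right,
            Submodule.starProjection_eq_self_iff.mpr (hx j)]
        simp_rw [he, ← inner_sum, hsum, inner_zero_right]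
      have h1 : S = ∑ j, RCLike.re ⟪x j - (Submodule.orthogonalProjectionOnto (K j) y : H), x j⟫_𝕜 := by
        have : ∀ j, RCLike.re ⟪x j - (Submodule.orthogonalProjectionOnto (K j) y : H), x j⟫_𝕜
            = ‖x j‖ ^ 2 - RCLike.re ⟪(Submodule.orthogonalProjectionOnto (K j) y : H), x j⟫_𝕜 := by
          intro j
          rw [inner_sub_left, map_sub, ← @norm_sq_eq_re_inner 𝕜]
        rw [Finset.sum_congr rfl fun j _ => this j, Finset.sum_sub_distrib, ← map_sum, hz,
          map_zero, sub_zero, hS]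
      have h2 : ∀ j, RCLike.re ⟪x j - (Submodule.orthogonalProjectionOnto (K j) y : H), x j⟫_𝕜 ≤ ε * ‖x j‖ := by
        intro j
        calc RCLike.re ⟪x j - (Submodule.orthogonalProjectionOnto (K j) y : H), x j⟫_𝕜
            ≤ ‖⟪x j - (Submodule.orthogonalProjectionOnto (K j) y : H), x j⟫_𝕜‖ := RCLike.re_le_norm _
          _ ≤ ‖x j - (Submodule.orthogonalProjectionOnto (K j) y : H)‖ * ‖x j‖ := norm_inner_le_norm _ _
          _ ≤ ε * ‖x j‖ := by
              refine mul_le_mul_of_nonneg_right ?_ (norm_nonneg _)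
              have := hy j
              rw [hP] at this
              rwa [norm_sub_rev]
      calc S = ∑ j, RCLike.re ⟪x j - (Submodule.orthogonalProjectionOnto (K j) y : H), x j⟫_𝕜 := h1
        _ ≤ ∑ j, ε * ‖x j‖ := Finset.sum_le_sum fun j _ => h2 j
        _ = ε * C := by rw [← Finset.mul_sum]
    have hSzero : S = 0 := by
      by_contra h
      have hSpos : 0 < S := lt_of_le_of_ne hS0 (Ne.symm h)
      have hle := hCε (S / (C + 1)) (by positivity)
      have hlt : S / (C + 1) * C < S := by
        rw [div_mul_eq_mul_div, div_lt_iff₀ (by linarith)]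
        nlinarith
      linarith
    have : ‖x i‖ ^ 2 = 0 := by
      have := (Finset.sum_eq_zero_iff_of_nonneg (fun j _ => sq_nonneg ‖x j‖)).mp hSzero
      exact this i (Finset.mem_univ i)
    have : ‖x i‖ = 0 := by
      nlinarith [norm_nonneg (x i)]
    exact norm_eq_zero.mp this
end

section
/- Let H be a Hilbert space and H_1, ..., H_n closed subspaces of H. The system H_1, ..., H_n possesses the inverse best approximation property if and only if there exist a Hilbert space K, pairwise orthogonal closed subspaces K_1, ..., K_n of K, and a continuous linear bijection φ : H → K with continuous inverse such that φ(H_i) = K_i for all i = 1, ..., n. -/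
universe u

namespace Stmt6Aux

variable {𝕜 : Type*} {H : Type u} [RCLike 𝕜] [NormedAddCommGroup H]
    [InnerProductSpace 𝕜 H] [CompleteSpace H]

local notation "⟪" x ", " y "⟫" => @inner 𝕜 _ _ x y

section Single

variable (K₀ : Submodule 𝕜 H) (hK₀ : IsClosed (K₀ : Set H))

theorem orthProjCLM_mem (y : H) : orthProjCLM K₀ hK₀ y ∈ K₀ :=
  haveI := hK₀.completeSpace_coe
  (K₀.orthogonalProjectionOnto y).2

theorem sub_orthProjCLM_mem (y : H) : y - orthProjCLM K₀ hK₀ y ∈ K₀ᗮ :=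
  haveI := hK₀.completeSpace_coe
  Submodule.sub_starProjection_mem_orthogonal (K := K₀) y

theorem orthProjCLM_eq {x y : H} (h1 : x ∈ K₀) (h2 : y - x ∈ K₀ᗮ) :
    orthProjCLM K₀ hK₀ y = x :=
  haveI := hK₀.completeSpace_coe
  Submodule.eq_starProjection_of_mem_orthogonal h1 h2

theorem orthProjCLM_eq_self {y : H} (h : y ∈ K₀) : orthProjCLM K₀ hK₀ y = y :=
  orthProjCLM_eq K₀ hK₀ h (by simp)

theorem orthProjCLM_eq_zero {y : H} (h : y ∈ K₀ᗮ) : orthProjCLM K₀ hK₀ y = 0 :=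
  orthProjCLM_eq K₀ hK₀ (zero_mem _) (by simpa)

theorem inner_orthProjCLM_left (u v : H) :
    ⟪orthProjCLM K₀ hK₀ u, v⟫ = ⟪u, orthProjCLM K₀ hK₀ v⟫ :=
  haveI := hK₀.completeSpace_coe
  Submodule.inner_starProjection_left_eq_right K₀ u v

end Single

section System

variable {n : ℕ} (K : Fin n → Submodule 𝕜 H) (hK : ∀ i, IsClosed ((K i : Set H)))

/-- The common orthogonal complement of all the `K i`. -/
def Nsub : Submodule 𝕜 H := (⨆ i, K i)ᗮ

theorem Nsub_isClosed : IsClosed ((Nsub K : Set H)) := Submodule.isClosed_orthogonal _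

theorem Nsub_le_orth (i : Fin n) : Nsub K ≤ (K i)ᗮ :=
  Submodule.orthogonal_le (le_iSup K i)

theorem K_le_Nsub_orth (i : Fin n) : K i ≤ (Nsub K)ᗮ :=
  (le_iSup K i).trans (Submodule.le_orthogonal_orthogonal _)

/-- The Hilbert space `ℓ²(K 1, ..., K n) ⊕₂ N`. -/
def Wsp : Type u := WithLp 2 ((PiLp 2 fun i => ↥(K i)) × ↥(Nsub K))

noncomputable instance : NormedAddCommGroup (Wsp K) := by unfold Wsp; infer_instance
noncomputable instance : InnerProductSpace 𝕜 (Wsp K) := by unfold Wsp; infer_instance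

include hK in
theorem Wsp_completeSpace : CompleteSpace (Wsp K) := by
  haveI : ∀ i, CompleteSpace (K i) := fun i => (hK i).completeSpace_coe
  haveI : CompleteSpace (Nsub K) := (Nsub_isClosed K).completeSpace_coe
  haveI : CompleteSpace (PiLp 2 fun i => ↥(K i)) :=
    inferInstance
  unfold Wsp
  infer_instance

theorem Wsp_ext {w w' : Wsp K} (h1 : ∀ j, w.1.1 j = w'.1.1 j) (h2 : w.1.2 = w'.1.2) : w = w' :=
  WithLp.ofLp_injective 2 (Prod.ext (WithLp.ofLp_injective 2 (funext h1)) h2)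

theorem Wsp_inner (w w' : Wsp K) :
    ⟪w, w'⟫ = ∑ i, ⟪w.1.1 i, w'.1.1 i⟫ + ⟪w.1.2, w'.1.2⟫ := by
  exact (WithLp.prod_inner_apply (𝕜 := 𝕜) w w').trans (by rw [PiLp.inner_apply])

/-- The map `y ↦ ((P_i y)_i, P_N y)`. -/
noncomputable def phi : H →L[𝕜] Wsp K :=
  haveI : ∀ i, CompleteSpace (K i) := fun i => (hK i).completeSpace_coe
  haveI : CompleteSpace (Nsub K) := (Nsub_isClosed K).completeSpace_coe
  ((WithLp.prodContinuousLinearEquiv 2 𝕜 (PiLp 2 fun i => ↥(K i))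
      ↥(Nsub K)).symm.toContinuousLinearMap).comp
    ((((PiLp.continuousLinearEquiv 2 𝕜 fun i => ↥(K i)).symm.toContinuousLinearMap).comp
      (ContinuousLinearMap.pi fun i => (K i).orthogonalProjectionOnto)).prod
      ((Nsub K).orthogonalProjectionOnto))

theorem phi_fst (y : H) (i : Fin n) :
    ((phi K hK y).1.1 i : H) = orthProjCLM (K i) (hK i) y := rfl

theorem phi_snd (y : H) :
    ((phi K hK y).1.2 : H) = orthProjCLM (Nsub K) (Nsub_isClosed K) y := rfl

theorem phi_ker : LinearMap.ker (phi K hK : H →ₗ[𝕜] Wsp K) = ⊥ := by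
  rw [LinearMap.ker_eq_bot']
  intro y hy
  replace hy : phi K hK y = 0 := hy
  have h1 : ∀ i, orthProjCLM (K i) (hK i) y = 0 := by
    intro i
    rw [← phi_fst K hK y i, hy]
    rfl
  have h2 : orthProjCLM (Nsub K) (Nsub_isClosed K) y = 0 := by
    rw [← phi_snd K hK y, hy]
    rfl
  have hyN : y ∈ Nsub K := by
    have h3 : ∀ i, y ∈ (K i)ᗮ := by
      intro i
      have := sub_orthProjCLM_mem (K i) (hK i) y
      rwa [h1 i, sub_zero] at this
    have : y ∈ ⨅ i, (K i)ᗮ := Submodule.mem_iInf _ |>.mpr h3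
    rwa [Submodule.iInf_orthogonal] at this
  rw [← orthProjCLM_eq_self (Nsub K) (Nsub_isClosed K) hyN, h2]

theorem phi_range (hib : IBAP K hK) : LinearMap.range (phi K hK : H →ₗ[𝕜] Wsp K) = ⊤ := by
  rw [LinearMap.range_eq_top]
  intro w
  obtain ⟨y, hy⟩ := hib (fun i => (w.1.1 i : H)) (fun i => (w.1.1 i).2)
  refine ⟨y - orthProjCLM (Nsub K) (Nsub_isClosed K) y + (w.1.2 : H), ?_⟩
  change phi K hK _ = w
  have hNy : orthProjCLM (Nsub K) (Nsub_isClosed K) y ∈ Nsub K :=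
    orthProjCLM_mem _ _ y
  apply Wsp_ext K
  · intro i
    apply Subtype.ext
    rw [phi_fst K hK]
    rw [map_add, map_sub, hy i,
      orthProjCLM_eq_zero (K i) (hK i) (Nsub_le_orth K i hNy),
      orthProjCLM_eq_zero (K i) (hK i) (Nsub_le_orth K i (w.1.2).2)]
    simp
  · apply Subtype.ext
    rw [phi_snd K hK, map_add, map_sub,
      orthProjCLM_eq_self (Nsub K) (Nsub_isClosed K) hNy,
      orthProjCLM_eq_self (Nsub K) (Nsub_isClosed K) (w.1.2).2]
    simp

/-- The `i`-th coordinate subspace of `Wsp`. -/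
def Lsub (i : Fin n) : Submodule 𝕜 (Wsp K) where
  carrier := {w | (∀ j, j ≠ i → w.1.1 j = 0) ∧ w.1.2 = 0}
  add_mem' := by
    rintro a b ⟨ha1, ha2⟩ ⟨hb1, hb2⟩
    refine ⟨fun j hj => ?_, ?_⟩
    · show a.1.1 j + b.1.1 j = 0
      rw [ha1 j hj, hb1 j hj, add_zero]
    · show a.1.2 + b.1.2 = 0
      rw [ha2, hb2, add_zero]
  zero_mem' := ⟨fun _ _ => rfl, rfl⟩
  smul_mem' := by
    rintro c a ⟨ha1, ha2⟩
    refine ⟨fun j hj => ?_, ?_⟩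
    · show c • a.1.1 j = 0
      rw [ha1 j hj, smul_zero]
    · show c • a.1.2 = 0
      rw [ha2, smul_zero]

theorem mem_Lsub {i : Fin n} {w : Wsp K} :
    w ∈ Lsub K i ↔ (∀ j, j ≠ i → w.1.1 j = 0) ∧ w.1.2 = 0 := Iff.rfl

theorem Lsub_isClosed (i : Fin n) : IsClosed ((Lsub K i : Set (Wsp K))) := by
  have c0 : Continuous fun w : Wsp K => w.1.1 :=
    continuous_fst.comp (WithLp.prodContinuousLinearEquiv 2 𝕜 _ _).continuous
  have c2 : Continuous fun w : Wsp K => w.1.2 :=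
    continuous_snd.comp (WithLp.prodContinuousLinearEquiv 2 𝕜 _ _).continuous
  have c1 : ∀ j, Continuous fun w : Wsp K => w.1.1 j := fun j =>
    (continuous_apply j).comp ((PiLp.continuousLinearEquiv 2 𝕜 _).continuous.comp c0)
  have : (Lsub K i : Set (Wsp K)) =
      (⋂ j, ⋂ _ : j ≠ i, {w : Wsp K | w.1.1 j = 0}) ∩ {w : Wsp K | w.1.2 = 0} := by
    ext w
    simp [mem_Lsub, Set.mem_iInter]
  rw [this]
  exact (isClosed_iInter fun j => isClosed_iInter fun _ =>
    isClosed_singleton.preimage (c1 j)).inter (isClosed_singleton.preimage c2)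

theorem Lsub_orth {i j : Fin n} (hij : i ≠ j) {u v : Wsp K}
    (hu : u ∈ Lsub K i) (hv : v ∈ Lsub K j) : ⟪u, v⟫ = 0 := by
  rw [Wsp_inner, hv.2, inner_zero_right, add_zero]
  apply Finset.sum_eq_zero
  intro k _
  by_cases hk : k = i
  · rw [hv.1 k (hk ▸ hij), inner_zero_right]
  · rw [hu.1 k hk, inner_zero_left]

/-- The canonical embedding of `K i` into `Wsp` as `Lsub i`. -/
def singleW (i : Fin n) (x : K i) : Wsp K := WithLp.toLp 2 (WithLp.toLp 2 (Pi.single i x), 0)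

theorem singleW_mem (i : Fin n) (x : K i) : singleW K i x ∈ Lsub K i :=
  ⟨fun j hj => Pi.single_eq_of_ne (M := fun j => ↥(K j)) hj x, rfl⟩

theorem inner_singleW (i : Fin n) (x : K i) (w : Wsp K) :
    ⟪singleW K i x, w⟫ = ⟪(x : H), (w.1.1 i : H)⟫ := by
  rw [Wsp_inner]
  have h2 : ((singleW K i x).1.2 : H) = 0 := rfl
  rw [show ((singleW K i x).1.2) = 0 from rfl, inner_zero_left, add_zero]
  rw [Finset.sum_eq_single i]
  · show ⟪(Pi.single i x : ∀ j, K j) i, w.1.1 i⟫ = _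
    rw [Pi.single_eq_same]
    rfl
  · intro b _ hb
    show ⟪(Pi.single i x : ∀ j, K j) b, w.1.1 b⟫ = 0
    rw [Pi.single_eq_of_ne hb, inner_zero_left]
  · intro h
    exact absurd (Finset.mem_univ i) h

/-- For any continuous linear equivalence between Hilbert spaces, the adjoints of `e` and
`e.symm` are mutually inverse. -/
theorem adj_left_inv {E F : Type*} [NormedAddCommGroup E] [InnerProductSpace 𝕜 E]
    [CompleteSpace E] [NormedAddCommGroup F] [InnerProductSpace 𝕜 F] [CompleteSpace F]
    (e : E ≃L[𝕜] F) (x : E) :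
    ContinuousLinearMap.adjoint (e : E →L[𝕜] F)
      (ContinuousLinearMap.adjoint (e.symm : F →L[𝕜] E) x) = x := by
  apply ext_inner_right 𝕜
  intro v
  rw [ContinuousLinearMap.adjoint_inner_left, ContinuousLinearMap.adjoint_inner_left]
  simp

theorem adj_right_inv {E F : Type*} [NormedAddCommGroup E] [InnerProductSpace 𝕜 E]
    [CompleteSpace E] [NormedAddCommGroup F] [InnerProductSpace 𝕜 F] [CompleteSpace F]
    (e : E ≃L[𝕜] F) (w : F) :
    ContinuousLinearMap.adjoint (e.symm : F →L[𝕜] E)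
      (ContinuousLinearMap.adjoint (e : E →L[𝕜] F) w) = w := by
  have := adj_left_inv (𝕜 := 𝕜) e.symm w
  rwa [ContinuousLinearEquiv.symm_symm] at this

/-- Key computation: the adjoint of `e.symm` maps an element of `K i` to the corresponding
canonical element of the coordinate subspace of `Wsp`. -/
theorem adj_singleW [CompleteSpace (Wsp K)] (e : H ≃L[𝕜] Wsp K)
    (he : (e : H →L[𝕜] Wsp K) = phi K hK) (i : Fin n) (x : H) (hx : x ∈ K i) :
    ContinuousLinearMap.adjoint (e.symm : Wsp K →L[𝕜] H) x = singleW K i ⟨x, hx⟩ := by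
  apply ext_inner_right 𝕜
  intro w
  rw [ContinuousLinearMap.adjoint_inner_left, inner_singleW]
  have h5 := phi_fst K hK (e.symm w) i
  rw [← he] at h5
  rw [ContinuousLinearEquiv.coe_coe, e.apply_symm_apply] at h5
  rw [h5, ContinuousLinearEquiv.coe_coe, ← inner_orthProjCLM_left,
    orthProjCLM_eq_self (K i) (hK i) hx]

include hK in
theorem forward (hib : IBAP K hK) :
    ∃ (W : Type u) (_ : NormedAddCommGroup W) (_ : InnerProductSpace 𝕜 W)
      (_ : CompleteSpace W) (L : Fin n → Submodule 𝕜 W),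
        (∀ i, IsClosed ((L i : Set W))) ∧
        (∀ i j, i ≠ j → ∀ u ∈ L i, ∀ v ∈ L j, ⟪u, v⟫ = 0) ∧
        ∃ φ : H ≃L[𝕜] W, ∀ i, φ '' (K i : Set H) = (L i : Set W) := by
  haveI : CompleteSpace (Wsp K) := Wsp_completeSpace K hK
  refine ⟨Wsp K, inferInstance, inferInstance, inferInstance, Lsub K,
    Lsub_isClosed K, fun i j hij u hu v hv => Lsub_orth K hij hu hv, ?_⟩
  set e : H ≃L[𝕜] Wsp K :=
    ContinuousLinearEquiv.ofBijective (phi K hK) (phi_ker K hK) (phi_range K hK hib) with hedef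
  have he : (e : H →L[𝕜] Wsp K) = phi K hK := by
    ext y
    rw [ContinuousLinearEquiv.coe_coe, hedef, ContinuousLinearEquiv.coeFn_ofBijective]
  refine ⟨ContinuousLinearEquiv.equivOfInverse
    (ContinuousLinearMap.adjoint (e.symm : Wsp K →L[𝕜] H))
    (ContinuousLinearMap.adjoint (e : H →L[𝕜] Wsp K))
    (fun x => adj_left_inv e x) (fun w => adj_right_inv e w), fun i => ?_⟩
  apply Set.Subset.antisymm
  · rintro w ⟨x, hx, rfl⟩
    rw [ContinuousLinearEquiv.equivOfInverse_apply, adj_singleW K hK e he i x hx]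
    exact singleW_mem K i _
  · intro w hw
    refine ⟨(w.1.1 i : H), (w.1.1 i).2, ?_⟩
    rw [ContinuousLinearEquiv.equivOfInverse_apply, adj_singleW K hK e he i _ (w.1.1 i).2]
    apply Wsp_ext K
    · intro j
      by_cases hj : j = i
      · subst hj
        exact Pi.single_eq_same (M := fun j => ↥(K j)) j _
      · rw [show (singleW K i ⟨((w.1.1 i : H)), (w.1.1 i).2⟩).1.1 j = 0 from
          Pi.single_eq_of_ne (M := fun j => ↥(K j)) hj _, hw.1 j hj]
    · rw [hw.2]
      rfl

theorem backward {W : Type u} [NormedAddCommGroup W] [InnerProductSpace 𝕜 W]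
    [CompleteSpace W] (L : Fin n → Submodule 𝕜 W) (hLc : ∀ i, IsClosed ((L i : Set W)))
    (hLo : ∀ i j, i ≠ j → ∀ u ∈ L i, ∀ v ∈ L j, ⟪u, v⟫ = 0)
    (φ : H ≃L[𝕜] W) (hφ : ∀ i, φ '' (K i : Set H) = (L i : Set W)) : IBAP K hK := by
  intro x hx
  refine ⟨ContinuousLinearMap.adjoint (φ : H →L[𝕜] W)
    (∑ j, orthProjCLM (L j) (hLc j)
      (ContinuousLinearMap.adjoint (φ.symm : W →L[𝕜] H) (x j))), fun i => ?_⟩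
  apply orthProjCLM_eq (K i) (hK i) (hx i)
  rw [Submodule.mem_orthogonal]
  intro k hk
  have hφk : φ k ∈ L i := by
    have : φ k ∈ (L i : Set W) := by
      rw [← hφ i]; exact ⟨k, hk, rfl⟩
    exact this
  rw [inner_sub_right, ContinuousLinearMap.adjoint_inner_right, inner_sum]
  rw [Finset.sum_eq_single_of_mem i (Finset.mem_univ i) (fun j _ hj =>
    hLo i j hj.symm _ (by rw [ContinuousLinearEquiv.coe_coe]; exact hφk) _
      (orthProjCLM_mem (L j) (hLc j) _))]
  rw [← inner_orthProjCLM_left, ContinuousLinearEquiv.coe_coe,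
    orthProjCLM_eq_self (L i) (hLc i) hφk, ContinuousLinearMap.adjoint_inner_right]
  simp

end System

end Stmt6Aux

/-- IBAP iff the system is isomorphic (via a continuous linear
bijection with continuous inverse) to a system of pairwise orthogonal closed
subspaces of some Hilbert space. -/
theorem stmt_6 {𝕜 : Type*} {H : Type u} [RCLike 𝕜] [NormedAddCommGroup H]
    [InnerProductSpace 𝕜 H] [CompleteSpace H] {n : ℕ}
    (K : Fin n → Submodule 𝕜 H) (hK : ∀ i, IsClosed ((K i : Set H))) :
    IBAP K hK ↔
      ∃ (W : Type u) (_ : NormedAddCommGroup W) (_ : InnerProductSpace 𝕜 W)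
        (_ : CompleteSpace W) (L : Fin n → Submodule 𝕜 W),
          (∀ i, IsClosed ((L i : Set W))) ∧
          (∀ i j, i ≠ j → ∀ u ∈ L i, ∀ v ∈ L j, (inner 𝕜 u v : 𝕜) = 0) ∧
          ∃ φ : H ≃L[𝕜] W, ∀ i, φ '' (K i : Set H) = (L i : Set W) := by
  constructor
  · exact Stmt6Aux.forward K hK
  · rintro ⟨W, _, _, _, L, hLc, hLo, φ, hφ⟩
    exact Stmt6Aux.backward K hK L hLc hLo φ hφ
end

section
/- Let H be a Hilbert space and H_1, ..., H_n closed subspaces of H. The system H_1, ..., H_n possesses the inverse best approximation property if and only if there exist continuous linear operators E_1, ..., E_n : H → H such that each E_k is a projection (E_k² = E_k), E_i E_j = 0 for every pair i ≠ j, and Ran(E_k) = H_k for every k = 1, ..., n. -/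
open scoped InnerProductSpace
open ContinuousLinearMap

/-- IBAP iff there are continuous linear projections
`E k` onto `K k` with `E i ∘ E j = 0` for `i ≠ j`. -/
theorem stmt_7 {𝕜 H : Type*} [RCLike 𝕜] [NormedAddCommGroup H]
    [InnerProductSpace 𝕜 H] [CompleteSpace H] {n : ℕ}
    (K : Fin n → Submodule 𝕜 H) (hK : ∀ i, IsClosed ((K i : Set H))) :
    IBAP K hK ↔
      ∃ E : Fin n → H →L[𝕜] H,
        (∀ k, ∀ x : H, E k (E k x) = E k x) ∧
        (∀ i j, i ≠ j → ∀ x : H, E i (E j x) = 0) ∧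
        (∀ k, Set.range (E k) = (K k : Set H)) := by
  classical
  haveI hC : ∀ i, CompleteSpace (K i) := fun i => (hK i).completeSpace_coe
  have horth : ∀ (i : Fin n) (y : H),
      orthProjCLM (K i) (hK i) y = (Submodule.orthogonalProjectionOnto (K i) y : H) := fun i y => rfl
  constructor
  · intro h
    haveI : CompleteSpace (PiLp 2 (fun i => (K i : Type _))) :=
      (completeSpace_congr
        (PiLp.continuousLinearEquiv 2 𝕜 (fun i => (K i : Type _))).isUniformEmbedding).mpr
        inferInstance
    set T : H →L[𝕜] PiLp 2 (fun i => (K i : Type _)) :=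
      (PiLp.continuousLinearEquiv 2 𝕜 (fun i => (K i : Type _))).symm.toContinuousLinearMap.comp
        (ContinuousLinearMap.pi fun i => (Submodule.orthogonalProjectionOnto (K i) : H →L[𝕜] K i)) with hTdef
    have hTapp : ∀ (y : H) (i : Fin n), T y i = Submodule.orthogonalProjectionOnto (K i) y := fun y i => rfl
    have hTsurj : LinearMap.range T.toLinearMap = ⊤ := by
      rw [LinearMap.range_eq_top]
      intro w
      obtain ⟨y, hy⟩ := h (fun i => (w i : H)) fun i => (w i).2
      refine ⟨y, (PiLp.ext fun i => Subtype.ext ?_ : T y = w)⟩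
      rw [hTapp, ← horth i y]
      exact hy i
    set Kr := (LinearMap.ker T.toLinearMap)ᗮ with hKr
    haveI : CompleteSpace Kr := (Submodule.isClosed_orthogonal _).completeSpace_coe
    haveI : CompleteSpace (LinearMap.ker T.toLinearMap) := (ContinuousLinearMap.isClosed_ker T).completeSpace_coe
    set T' := T.comp (Submodule.subtypeL Kr) with hT'
    have hker : LinearMap.ker T'.toLinearMap = ⊥ := by
      rw [LinearMap.ker_eq_bot']
      intro m hm
      have h1 : (m : H) ∈ LinearMap.ker T.toLinearMap := by
        simpa [hT'] using hm
      have h2 := (Submodule.mem_orthogonal _ (m : H)).mp m.2 (m : H) h1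
      exact Subtype.ext (inner_self_eq_zero.mp h2)
    have hsur : LinearMap.range T'.toLinearMap = ⊤ := by
      rw [LinearMap.range_eq_top]
      intro w
      obtain ⟨y, hy⟩ := LinearMap.range_eq_top.mp hTsurj w
      refine ⟨⟨y - Submodule.orthogonalProjectionOnto (LinearMap.ker T.toLinearMap) y,
        Submodule.sub_starProjection_mem_orthogonal y⟩, ?_⟩
      have hker' : T ((Submodule.orthogonalProjectionOnto (LinearMap.ker T.toLinearMap) y : H)) = 0 :=
        (Submodule.orthogonalProjectionOnto (LinearMap.ker T.toLinearMap) y).2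
      show T (y - (Submodule.orthogonalProjectionOnto (LinearMap.ker T.toLinearMap) y : H)) = w
      rw [map_sub, hker', sub_zero]; exact hy
    let e := ContinuousLinearEquiv.ofBijective T' hker hsur
    let S : PiLp 2 (fun i => (K i : Type _)) →L[𝕜] H :=
      Kr.subtypeL.comp e.symm.toContinuousLinearMap
    have hTS : ∀ w, T (S w) = w := fun w => e.apply_symm_apply w
    have hPS : ∀ w (i : Fin n), Submodule.orthogonalProjectionOnto (K i) (S w) = w i :=
      fun w i => congrArg (fun v => v i) (hTS w)
    let sg : ∀ k, (K k) →L[𝕜] PiLp 2 (fun i => (K i : Type _)) := fun k =>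
      (PiLp.continuousLinearEquiv 2 𝕜 (fun i => (K i : Type _))).symm.toContinuousLinearMap.comp
        ⟨LinearMap.single 𝕜 (fun i => K i) k, by
          exact continuous_single (A := fun i => (K i : Type _)) k⟩
    have hsg : ∀ k (v : K k) (i : Fin n),
        sg k v i = (Pi.single (M := fun i => (K i : Type _)) k v) i := fun k v i => rfl
    let F : Fin n → H →L[𝕜] H := fun k => S.comp ((sg k).comp (Submodule.orthogonalProjectionOnto (K k)))
    have hFapp : ∀ k (x : H), F k x = S (sg k (Submodule.orthogonalProjectionOnto (K k) x)) := fun k x => rfl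
    have hPF : ∀ k i (x : H), Submodule.orthogonalProjectionOnto (K i) (F k x) =
        (Pi.single (M := fun i => (K i : Type _)) k (Submodule.orthogonalProjectionOnto (K k) x)) i := by
      intro k i x
      rw [hFapp, hPS]
      exact hsg k _ i
    have hFF : ∀ k (x : H), F k (F k x) = F k x := by
      intro k x
      rw [hFapp k (F k x), hPF k k x, Pi.single_eq_same]
      exact (hFapp k x).symm
    have hFij : ∀ i j, i ≠ j → ∀ x : H, F j (F i x) = 0 := by
      intro i j hij x
      rw [hFapp j (F i x), hPF i j x, Pi.single_eq_of_ne (Ne.symm hij), map_zero, map_zero]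
    let E : Fin n → H →L[𝕜] H := fun k => ContinuousLinearMap.adjoint (F k)
    have hadj : ∀ k (x y : H), ⟪E k y, x⟫_𝕜 = ⟪y, F k x⟫_𝕜 :=
      fun k x y => ContinuousLinearMap.adjoint_inner_left (F k) x y
    have hEEk : ∀ k (x : H), E k (E k x) = E k x := by
      intro k x
      have hc : F k ∘L F k = F k := ContinuousLinearMap.ext (hFF k)
      have hE : E k ∘L E k = E k := by
        show adjoint (F k) ∘L adjoint (F k) = adjoint (F k)
        rw [← ContinuousLinearMap.adjoint_comp, hc]
      exact ContinuousLinearMap.ext_iff.mp hE x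
    have hEij : ∀ i j, i ≠ j → ∀ x : H, E i (E j x) = 0 := by
      intro i j hij x
      have hc : F j ∘L F i = 0 := ContinuousLinearMap.ext fun z => hFij i j hij z
      have hE : E i ∘L E j = 0 := by
        show adjoint (F i) ∘L adjoint (F j) = 0
        rw [← ContinuousLinearMap.adjoint_comp, hc]
        exact map_zero (ContinuousLinearMap.adjoint : (H →L[𝕜] H) ≃ₗᵢ⋆[𝕜] (H →L[𝕜] H))
      exact ContinuousLinearMap.ext_iff.mp hE x
    have hmem : ∀ k (x : H), E k x ∈ K k := by
      intro k x
      have hmem' : E k x ∈ ((K k)ᗮ)ᗮ := by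
        rw [Submodule.mem_orthogonal']
        intro u hu
        rw [hadj]
        have h0 : Submodule.orthogonalProjectionOnto (K k) u = 0 :=
          Submodule.orthogonalProjectionOnto_apply_of_mem_orthogonal hu
        rw [hFapp, h0, map_zero, map_zero, inner_zero_right]
      rwa [Submodule.orthogonal_orthogonal] at hmem'
    have hfixE : ∀ k (v : H), v ∈ K k → E k v = v := by
      intro k v hv
      set u := v - E k v with hu
      have hu1 : u ∈ K k := (K k).sub_mem hv (hmem k v)
      have hEu : E k u = 0 := by rw [hu, map_sub, hEEk, sub_self]
      have key : ⟪u, F k u⟫_𝕜 = 0 := by rw [← hadj, hEu, inner_zero_left]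
      have hPu : (Submodule.orthogonalProjectionOnto (K k) u : H) = u := Submodule.starProjection_eq_self_iff.mpr hu1
      have hPFu : (Submodule.orthogonalProjectionOnto (K k) (F k u) : H) = u := by
        rw [hFapp, hPS]
        have h2 : sg k (Submodule.orthogonalProjectionOnto (K k) u) k = Submodule.orthogonalProjectionOnto (K k) u := by
          rw [hsg, Pi.single_eq_same]
        rw [h2, hPu]
      have horthpart : F k u - u ∈ (K k)ᗮ := by
        have h3 : F k u - (Submodule.orthogonalProjectionOnto (K k) (F k u) : H) ∈ (K k)ᗮ :=
            Submodule.sub_starProjection_mem_orthogonal (K := K k) (F k u)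
        rwa [hPFu] at h3
      have key2 : ⟪u, F k u⟫_𝕜 = ⟪u, u⟫_𝕜 := by
        have h3 : ⟪u, F k u - u⟫_𝕜 = 0 :=
          (Submodule.mem_orthogonal _ _).mp horthpart u hu1
        rw [inner_sub_right] at h3
        linear_combination h3
      rw [key2] at key
      have hu0 : u = 0 := inner_self_eq_zero.mp key
      have : v - E k v = 0 := hu ▸ hu0
      exact (sub_eq_zero.mp this).symm
    refine ⟨E, hEEk, hEij, fun k => Set.ext fun x => ?_⟩
    constructor
    · rintro ⟨y, rfl⟩; exact hmem k y
    · intro hx; exact ⟨x, hfixE k x hx⟩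
  · rintro ⟨E, hE1, hE2, hE3⟩ x hx
    have hfix : ∀ k (v : H), v ∈ K k → E k v = v := by
      intro k v hv
      have hv' : v ∈ Set.range (E k) := by rw [hE3]; exact hv
      obtain ⟨w, rfl⟩ := hv'
      exact hE1 k w
    refine ⟨∑ j, ContinuousLinearMap.adjoint (E j) (x j), fun i => ?_⟩
    rw [horth]
    apply Submodule.eq_starProjection_of_mem_of_inner_eq_zero (hx i)
    intro w hw
    rw [inner_sub_left, sum_inner, sub_eq_zero]
    rw [Finset.sum_eq_single i]
    · rw [ContinuousLinearMap.adjoint_inner_left, hfix i w hw]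
    · intro j _ hj
      rw [ContinuousLinearMap.adjoint_inner_left, ← hfix i w hw, hE2 j i hj, inner_zero_right]
    · intro hi; exact absurd (Finset.mem_univ i) hi
end

section
/- Let H be a Hilbert space, A : H → H a continuous linear operator, and λ_1, ..., λ_n pairwise distinct scalars. Then the system of eigenspaces H_k := ker(A − λ_k I), k = 1, ..., n, possesses the inverse best approximation property. -/
open Polynomial ContinuousLinearMap Finset

local notation "⟪" x ", " y "⟫" => @inner _ _ _ x y

private lemma pow_apply_eig' {𝕜 H : Type*} [RCLike 𝕜] [NormedAddCommGroup H]
    [InnerProductSpace 𝕜 H] (A : H →L[𝕜] H) {u : H} {l : 𝕜} (hu : A u = l • u) (m : ℕ) :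
    (A ^ m) u = l ^ m • u := by
  induction m with
  | zero => simp
  | succ m ih =>
      rw [pow_succ, pow_succ, ContinuousLinearMap.mul_apply, hu, map_smul, ih, smul_smul, mul_comm]

private lemma aeval_apply_eig' {𝕜 H : Type*} [RCLike 𝕜] [NormedAddCommGroup H]
    [InnerProductSpace 𝕜 H] (A : H →L[𝕜] H) {u : H} {l : 𝕜} (hu : A u = l • u)
    (p : 𝕜[X]) : (Polynomial.aeval A p) u = p.eval l • u := by
  induction p using Polynomial.induction_on' with
  | add p q hp hq => simp [hp, hq, add_smul]
  | monomial m a =>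
      simp [Polynomial.aeval_monomial, ContinuousLinearMap.mul_apply, Algebra.algebraMap_eq_smul_one,
        pow_apply_eig' A hu m, eval_monomial, mul_smul]



/-- the eigenspaces of a continuous linear operator corresponding
to pairwise distinct scalars possess the IBAP. -/
theorem stmt_13 {𝕜 H : Type*} [RCLike 𝕜] [NormedAddCommGroup H]
    [InnerProductSpace 𝕜 H] [CompleteSpace H] {n : ℕ}
    (A : H →L[𝕜] H) (lam : Fin n → 𝕜)
    (hlam : ∀ i j, i ≠ j → lam i ≠ lam j) :
    IBAP (fun k => LinearMap.ker ((A - lam k • (ContinuousLinearMap.id 𝕜 H) : H →L[𝕜] H) : H →ₗ[𝕜] H))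
      (fun k => ContinuousLinearMap.isClosed_ker _) := by
  intro x hx
  have heig : ∀ i, A (x i) = lam i • x i := by
    intro i
    have h2 : A (x i) - lam i • (x i) = 0 := by simpa using (LinearMap.mem_ker.mp (hx i))
    exact sub_eq_zero.mp h2
  set p : Fin n → 𝕜[X] := fun k => ∏ j ∈ Finset.univ.erase k, (X - C (lam j)) with hp
  set c : Fin n → 𝕜 := fun k => (p k).eval (lam k) with hcdef
  have hc0 : ∀ k i, k ≠ i → (p k).eval (lam i) = 0 := by
    intro k i hki
    rw [hp]
    simp only [eval_prod]
    exact Finset.prod_eq_zero (Finset.mem_erase.mpr ⟨Ne.symm hki, Finset.mem_univ i⟩)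
      (by simp)
  have hcne : ∀ k, c k ≠ 0 := by
    intro k
    rw [hcdef, hp]
    simp only [eval_prod]
    apply Finset.prod_ne_zero_iff.mpr
    intro j hj
    simp only [eval_sub, eval_X, eval_C, sub_ne_zero]
    exact hlam k j (fun h => (Finset.mem_erase.mp hj).1 h.symm)
  refine ⟨∑ k, ((starRingEnd 𝕜) (c k))⁻¹ •
      (ContinuousLinearMap.adjoint (Polynomial.aeval A (p k))) (x k), ?_⟩
  intro i
  simp only [orthProjCLM, ContinuousLinearMap.comp_apply, Submodule.subtypeL_apply]
  apply Submodule.eq_starProjection_of_mem_of_inner_eq_zero (hx i)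
  intro w hw
  have hw' : A w = lam i • w := by
    have h2 : A w - lam i • w = 0 := by simpa using (LinearMap.mem_ker.mp hw)
    exact sub_eq_zero.mp h2
  rw [inner_sub_left, sub_eq_zero, sum_inner]
  rw [Finset.sum_eq_single i]
  · rw [inner_smul_left, adjoint_inner_left, aeval_apply_eig' A hw', inner_smul_right]
    rw [map_inv₀, starRingEnd_self_apply]; exact inv_mul_cancel_left₀ (hcne i) _
  · intro k _ hki
    rw [inner_smul_left, adjoint_inner_left, aeval_apply_eig' A hw', hc0 k i hki]
    simp
  · intro h; exact absurd (Finset.mem_univ i) h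
end

section
/- Let H be a Hilbert space, H_1, ..., H_n closed subspaces of H whose system possesses the inverse best approximation property, and λ_1, ..., λ_n pairwise distinct scalars. Then there exists a continuous linear operator A : H → H such that H_k = ker(A − λ_k I) for every k = 1, ..., n. -/
set_option maxHeartbeats 1000000


section Aux

variable {𝕜 H : Type*} [RCLike 𝕜] [NormedAddCommGroup H]
    [InnerProductSpace 𝕜 H] [CompleteSpace H] {n : ℕ}
    (K : Fin n → Submodule 𝕜 H) (hK : ∀ i, IsClosed ((K i : Set H)))

/-- The tuple-of-projections map. -/
noncomputable def Tmap : H →L[𝕜] (∀ i, K i) :=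
  ContinuousLinearMap.pi fun i =>
    haveI : CompleteSpace (K i) := (hK i).completeSpace_coe
    (K i).orthogonalProjectionOnto

/-- The summation map. -/
noncomputable def Rmap : (∀ i, K i) →L[𝕜] H :=
  ∑ i, (K i).subtypeL.comp (ContinuousLinearMap.proj i)

lemma Rmap_apply (u : ∀ i, K i) : Rmap K u = ∑ i, (u i : H) := by
  simp [Rmap]

lemma Tmap_apply (y : H) (i : Fin n) :
    haveI : CompleteSpace (K i) := (hK i).completeSpace_coe
    Tmap K hK y i = (K i).orthogonalProjectionOnto y := rfl

lemma Tmap_surj (hIBAP : IBAP K hK) : Function.Surjective (Tmap K hK) := by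
  intro u
  obtain ⟨y, hy⟩ := hIBAP (fun i => (u i : H)) (fun i => (u i).2)
  refine ⟨y, funext fun i => ?_⟩
  haveI : CompleteSpace (K i) := (hK i).completeSpace_coe
  have : (((K i).orthogonalProjectionOnto y : H)) = (u i : H) := hy i
  exact Subtype.ext (by simpa [Tmap_apply] using this)

end Aux

/-- if a system of closed subspaces has the IBAP and
`lam 1, ..., lam n` are pairwise distinct scalars, then there is a continuous
linear operator `A` with `K k = ker (A - lam k • I)` for all `k`. -/
theorem stmt_14 {𝕜 H : Type*} [RCLike 𝕜] [NormedAddCommGroup H]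
    [InnerProductSpace 𝕜 H] [CompleteSpace H] {n : ℕ}
    (K : Fin n → Submodule 𝕜 H) (hK : ∀ i, IsClosed ((K i : Set H)))
    (hIBAP : IBAP K hK) (lam : Fin n → 𝕜)
    (hlam : ∀ i j, i ≠ j → lam i ≠ lam j) :
    ∃ A : H →L[𝕜] H, ∀ k,
      K k = LinearMap.ker ((A - lam k • (ContinuousLinearMap.id 𝕜 H)) : H →ₗ[𝕜] H) := by
  classical
  haveI : ∀ i, CompleteSpace (K i) := fun i => (hK i).completeSpace_coe
  set V := ∀ i, K i with hV
  set T : H →L[𝕜] V := Tmap K hK with hT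
  set R : V →L[𝕜] H := Rmap K with hR
  -- open mapping bound
  obtain ⟨C, hC0, hCy⟩ := T.exists_preimage_norm_le (Tmap_surj K hK hIBAP)
  -- R is bounded below
  have hbdd : ∀ u : V, ‖u‖ ≤ C * ‖R u‖ := by
    intro u
    rcases eq_or_ne u 0 with rfl | hu
    · simp [mul_nonneg hC0.le (norm_nonneg _)]
    have hupos : (0 : ℝ) < ‖u‖ := norm_pos_iff.mpr hu
    obtain ⟨y, hy, hynorm⟩ := hCy u
    -- ∑ ‖u i‖^2 = re ⟪R u, y⟫
    have hinner : RCLike.re (inner 𝕜 (R u) y : 𝕜) = ∑ i, ‖(u i : H)‖ ^ 2 := by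
      rw [Rmap_apply, sum_inner]
      rw [map_sum]
      refine Finset.sum_congr rfl fun i _ => ?_
      have h1 : (inner 𝕜 ((u i : H)) (y - (K i).orthogonalProjectionOnto y) : 𝕜) = 0 :=
        Submodule.inner_right_of_mem_orthogonal (u i).2
          (Submodule.sub_starProjection_mem_orthogonal y)
      have h2 : (inner 𝕜 ((u i : H)) y : 𝕜)
          = inner 𝕜 ((u i : H)) (((K i).orthogonalProjectionOnto y : H)) := by
        have := h1
        rw [inner_sub_right, sub_eq_zero] at this
        exact this
      have h3 : (K i).orthogonalProjectionOnto y = u i := congrFun hy i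
      rw [h2, h3]
      simpa using inner_self_eq_norm_sq ((u i : H))
    have hS1 : ‖u‖ ^ 2 ≤ ∑ i, ‖(u i : H)‖ ^ 2 := by
      have hSnn : (0 : ℝ) ≤ ∑ i, ‖(u i : H)‖ ^ 2 :=
        Finset.sum_nonneg fun i _ => sq_nonneg _
      have hle : ‖u‖ ≤ Real.sqrt (∑ i, ‖(u i : H)‖ ^ 2) := by
        refine (pi_norm_le_iff_of_nonneg (Real.sqrt_nonneg _)).mpr fun i => ?_
        have : ‖(u i : H)‖ ^ 2 ≤ ∑ j, ‖(u j : H)‖ ^ 2 :=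
          Finset.single_le_sum (f := fun j => ‖(u j : H)‖ ^ 2)
            (fun j _ => sq_nonneg _) (Finset.mem_univ i)
        have h4 : ‖u i‖ = ‖(u i : H)‖ := rfl
        rw [h4]
        exact (Real.le_sqrt (norm_nonneg _) hSnn).mpr this
      calc ‖u‖ ^ 2 ≤ Real.sqrt (∑ i, ‖(u i : H)‖ ^ 2) ^ 2 := by
            exact pow_le_pow_left₀ (norm_nonneg _) hle 2
        _ = ∑ i, ‖(u i : H)‖ ^ 2 := Real.sq_sqrt hSnn
    have hS2 : ∑ i, ‖(u i : H)‖ ^ 2 ≤ ‖R u‖ * (C * ‖u‖) := by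
      calc ∑ i, ‖(u i : H)‖ ^ 2 = RCLike.re (inner 𝕜 (R u) y : 𝕜) := hinner.symm
        _ ≤ ‖(inner 𝕜 (R u) y : 𝕜)‖ := RCLike.re_le_norm _
        _ ≤ ‖R u‖ * ‖y‖ := norm_inner_le_norm _ _
        _ ≤ ‖R u‖ * (C * ‖u‖) := by
            exact mul_le_mul_of_nonneg_left hynorm (norm_nonneg _)
    have key : ‖u‖ * ‖u‖ ≤ C * ‖R u‖ * ‖u‖ := by
      have := hS1.trans hS2
      rw [sq] at this
      nlinarith [this]
    exact le_of_mul_le_mul_right key hupos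
  have hanti : AntilipschitzWith (Real.toNNReal C) R :=
    ContinuousLinearMap.antilipschitz_of_bound R (by
      intro x
      simpa [Real.coe_toNNReal C hC0.le] using hbdd x)
  have hinj : Function.Injective R := hanti.injective
  set M : Submodule 𝕜 H := LinearMap.range (R : V →ₗ[𝕜] H) with hM
  have hMclosed : IsClosed (M : Set H) := by
    have := (hanti.isClosedEmbedding R.uniformContinuous).isClosed_range
    simpa [hM, LinearMap.coe_range] using this
  haveI : CompleteSpace M := hMclosed.completeSpace_coe
  set Rcod : V →L[𝕜] M := R.codRestrict M (fun u => LinearMap.mem_range_self _ u)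
    with hRcod
  have hRcod_coe : ∀ u, (Rcod u : H) = R u := fun u => rfl
  have hker : LinearMap.ker (Rcod : V →ₗ[𝕜] M) = ⊥ := by
    refine LinearMap.ker_eq_bot.mpr fun a b hab => ?_
    exact hinj (congrArg Subtype.val hab)
  have hrange : LinearMap.range (Rcod : V →ₗ[𝕜] M) = ⊤ := by
    refine LinearMap.range_eq_top.mpr ?_
    rintro ⟨m, hm⟩
    obtain ⟨u, hu⟩ := hm
    exact ⟨u, Subtype.ext (by simpa [hRcod_coe] using hu)⟩
  set E := ContinuousLinearEquiv.ofBijective Rcod hker hrange with hE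
  have hE_apply : ∀ u, E u = Rcod u := fun u => rfl
  set R' : H →L[𝕜] V :=
    (E.symm : M →L[𝕜] V).comp (M.orthogonalProjectionOnto) with hR'
  have hRR' : ∀ x : H, R (R' x) = (M.orthogonalProjectionOnto x : H) := by
    intro x
    have h : Rcod (R' x) = M.orthogonalProjectionOnto x :=
      E.apply_symm_apply (M.orthogonalProjectionOnto x)
    rw [← hRcod_coe, h]
  have hRsingle : ∀ (k : Fin n) (v : K k), R (Pi.single k v) = (v : H) := by
    intro k v
    rw [Rmap_apply]
    rw [Finset.sum_eq_single_of_mem k (Finset.mem_univ k)]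
    · simp
    · intro j _ hj
      simp [Pi.single_eq_of_ne hj]
  -- R' on elements of K k
  have hR'single : ∀ (k : Fin n) (v : K k), R' (v : H) = Pi.single k v := by
    intro k v
    have hvM : (v : H) ∈ M := ⟨Pi.single k v, hRsingle k v⟩
    have hproj : M.orthogonalProjectionOnto (v : H) = ⟨(v : H), hvM⟩ :=
      Subtype.ext (Submodule.starProjection_eq_self_iff.mpr hvM)
    have hEsingle : E (Pi.single k v) = ⟨(v : H), hvM⟩ := by
      rw [hE_apply]
      exact Subtype.ext (by rw [hRcod_coe]; exact hRsingle k v)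
    rw [hR']
    simp only [ContinuousLinearMap.coe_comp', Function.comp_apply]
    rw [hproj, ← hEsingle]
    simp
  -- diagonal operator
  set D : V →L[𝕜] V := ContinuousLinearMap.pi
    (fun i => lam i • ContinuousLinearMap.proj i) with hD
  have hD_apply : ∀ (u : V) i, D u i = lam i • u i := fun u i => rfl
  -- choose c outside the range of lam
  obtain ⟨c, hc⟩ := ((Set.finite_range lam).infinite_compl).nonempty
  have hc' : ∀ k, c ≠ lam k := by
    intro k hck
    exact hc ⟨k, hck.symm⟩
  refine ⟨R.comp (D.comp R') + c • (ContinuousLinearMap.id 𝕜 H - R.comp R'), fun k => ?_⟩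
  have hA_apply : ∀ x : H,
      (R.comp (D.comp R') + c • (ContinuousLinearMap.id 𝕜 H - R.comp R')) x
        = R (D (R' x)) + c • (x - R (R' x)) := fun x => rfl
  ext x
  simp only [LinearMap.mem_ker, ContinuousLinearMap.coe_sub',
    ContinuousLinearMap.coe_coe, Pi.sub_apply, ContinuousLinearMap.smul_apply,
    ContinuousLinearMap.coe_id', id_eq,
    ContinuousLinearMap.coe_smul', Pi.smul_apply, LinearMap.sub_apply, LinearMap.smul_apply]
  rw [hA_apply]
  constructor
  · intro hx
    have h1 : R' x = Pi.single k ⟨x, hx⟩ := hR'single k ⟨x, hx⟩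
    have h2 : D (Pi.single k ⟨x, hx⟩) = Pi.single k (lam k • (⟨x, hx⟩ : K k)) := by
      funext i
      rw [hD_apply]
      rcases eq_or_ne i k with rfl | hik
      · simp
      · simp [Pi.single_eq_of_ne hik]
    rw [h1, h2, hRsingle k (lam k • (⟨x, hx⟩ : K k)), hRsingle k ⟨x, hx⟩]
    simp
  · intro hx
    -- backward direction
    set u : V := R' x with hu
    set m : H := R u with hm
    have hmM : m ∈ M := LinearMap.mem_range_self _ u
    have hmproj : m = (M.orthogonalProjectionOnto x : H) := hRR' x
    have hnu : x - m ∈ Mᗮ := by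
      rw [hmproj]
      exact Submodule.sub_starProjection_mem_orthogonal x
    have heq : R (D u) + c • (x - m) = lam k • x := by
      have := sub_eq_zero.mp hx
      simpa using this
    have heq2 : R (D u) - lam k • m = (lam k - c) • (x - m) := by
      have : lam k • x = lam k • m + lam k • (x - m) := by
        rw [← smul_add]
        congr 1
        abel
      rw [this] at heq
      rw [sub_smul, eq_sub_of_add_eq heq]
      abel
    have hLHS : R (D u) - lam k • m ∈ M := by
      exact M.sub_mem (LinearMap.mem_range_self _ (D u)) (M.smul_mem _ hmM)
    have hRHS : R (D u) - lam k • m ∈ Mᗮ := by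
      rw [heq2]
      exact Mᗮ.smul_mem _ hnu
    have hzero : R (D u) - lam k • m = 0 := by
      have := hRHS (R (D u) - lam k • m) hLHS
      exact inner_self_eq_zero.mp this
    have hxm : x = m := by
      have h5 : (lam k - c) • (x - m) = 0 := by rw [← heq2, hzero]
      have h6 : lam k - c ≠ 0 := sub_ne_zero.mpr fun h => hc' k h.symm
      have h7 := (smul_eq_zero.mp h5).resolve_left h6
      exact sub_eq_zero.mp h7
    have hDu : D u = lam k • u := by
      apply hinj
      rw [map_smul, ← hm]
      exact sub_eq_zero.mp hzero
    have huj : ∀ j, j ≠ k → u j = 0 := by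
      intro j hj
      have h8 : lam j • u j = lam k • u j := by
        have := congrFun (congrArg (fun v : V => v) hDu) j
        exact (hD_apply u j).symm.trans (congrFun hDu j)
      have h9 : (lam j - lam k) • u j = 0 := by
        rw [sub_smul, h8, sub_self]
      exact (smul_eq_zero.mp h9).resolve_left (sub_ne_zero.mpr (hlam j k hj))
    have hxuk : x = (u k : H) := by
      rw [hxm, hm, Rmap_apply]
      rw [Finset.sum_eq_single_of_mem k (Finset.mem_univ k)]
      intro j _ hj
      rw [huj j hj]
      simp
    rw [hxuk]
    exact (u k).2
end

section
/- Let H be a Hilbert space and H_1, ..., H_n closed subspaces of H, not all zero, whose system possesses the inverse best approximation property, and let c := inf{ ‖x_1 + ... + x_n‖ / √(‖x_1‖² + ... + ‖x_n‖²) : x_k ∈ H_k, (x_1, ..., x_n) ≠ (0, ..., 0) }. If H_1', ..., H_n' are closed subspaces of H such that θ(H_1, H_1')² + ... + θ(H_n, H_n')² < c², where θ(M, N) = ‖P_M − P_N‖ is the opening between closed subspaces M and N (the operator norm of the difference of the orthogonal projections onto M and N), then the system H_1', ..., H_n' also possesses the inverse best approximation property. -/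
section aux
variable {𝕜 H : Type*} [RCLike 𝕜] [NormedAddCommGroup H] [InnerProductSpace 𝕜 H]
  [CompleteSpace H]

lemma orthProjCLM_mem (K : Submodule 𝕜 H) (hK : IsClosed (K : Set H)) (v : H) :
    orthProjCLM K hK v ∈ K := by
  haveI : CompleteSpace K := hK.completeSpace_coe
  exact (Submodule.orthogonalProjectionOnto K v).2

lemma orthProjCLM_eq_self (K : Submodule 𝕜 H) (hK : IsClosed (K : Set H)) {v : H}
    (hv : v ∈ K) : orthProjCLM K hK v = v := by
  haveI : CompleteSpace K := hK.completeSpace_coe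
  exact K.starProjection_eq_self_iff.2 hv

lemma norm_orthProjCLM_le (K : Submodule 𝕜 H) (hK : IsClosed (K : Set H)) (v : H) :
    ‖orthProjCLM K hK v‖ ≤ ‖v‖ := by
  haveI : CompleteSpace K := hK.completeSpace_coe
  have h1 : ‖Submodule.orthogonalProjectionOnto K v‖ ≤ ‖Submodule.orthogonalProjectionOnto K‖ * ‖v‖ :=
    (Submodule.orthogonalProjectionOnto K).le_opNorm v
  have h2 : ‖Submodule.orthogonalProjectionOnto K‖ * ‖v‖ ≤ 1 * ‖v‖ :=
    mul_le_mul_of_nonneg_right (Submodule.orthogonalProjectionOnto_norm_le K) (norm_nonneg v)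
  calc ‖orthProjCLM K hK v‖ = ‖Submodule.orthogonalProjectionOnto K v‖ := rfl
    _ ≤ 1 * ‖v‖ := h1.trans h2
    _ = ‖v‖ := one_mul _

lemma inner_orthProjCLM (K : Submodule 𝕜 H) (hK : IsClosed (K : Set H)) {w : H}
    (hw : w ∈ K) (v : H) :
    (inner 𝕜 w (orthProjCLM K hK v) : 𝕜) = inner 𝕜 w v := by
  haveI : CompleteSpace K := hK.completeSpace_coe
  have h0 : (inner 𝕜 (v - (Submodule.orthogonalProjectionOnto K v : H)) w : 𝕜) = 0 :=
    K.starProjection_inner_eq_zero v w hw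
  have h1 : (inner 𝕜 w (v - (Submodule.orthogonalProjectionOnto K v : H)) : 𝕜) = 0 :=
    inner_eq_zero_symm.1 h0
  rw [inner_sub_right] at h1
  have : (inner 𝕜 w (orthProjCLM K hK v) : 𝕜) = inner 𝕜 w ((Submodule.orthogonalProjectionOnto K v : H)) := rfl
  rw [this]
  linear_combination -h1

end aux

section aux2
variable {𝕜 H : Type*} [RCLike 𝕜] [NormedAddCommGroup H] [InnerProductSpace 𝕜 H]
  [CompleteSpace H]

lemma exists_preimage_of_opening_lt (M N : Submodule 𝕜 H) (hM : IsClosed (M : Set H))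
    (hN : IsClosed (N : Set H))
    (h : ‖orthProjCLM M hM - orthProjCLM N hN‖ < 1) {u : H} (hu : u ∈ N) :
    ∃ z ∈ M, orthProjCLM N hN z = u := by
  haveI : CompleteSpace N := hN.completeSpace_coe
  set B : N →L[𝕜] N :=
    (Submodule.orthogonalProjectionOnto N).comp ((orthProjCLM M hM).comp N.subtypeL) with hBdef
  have hcoe : ∀ w : N, (B w : H) = orthProjCLM N hN (orthProjCLM M hM (w : H)) := fun w => rfl
  have hB : ‖1 - B‖ < 1 := by
    refine lt_of_le_of_lt (ContinuousLinearMap.opNorm_le_bound _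
      (norm_nonneg _) ?_) h
    intro w
    have hcoe2 : (((1 - B) w : N) : H)
        = orthProjCLM N hN ((orthProjCLM N hN - orthProjCLM M hM) (w : H)) := by
      have hNw : orthProjCLM N hN (w : H) = (w : H) := orthProjCLM_eq_self N hN w.2
      simp only [ContinuousLinearMap.sub_apply, map_sub, hNw, hcoe,
        ContinuousLinearMap.one_apply, AddSubgroupClass.coe_sub]
    have h1 : ‖(1 - B) w‖ = ‖(((1 - B) w : N) : H)‖ := rfl
    rw [h1, hcoe2]
    calc ‖orthProjCLM N hN ((orthProjCLM N hN - orthProjCLM M hM) (w : H))‖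
        ≤ ‖(orthProjCLM N hN - orthProjCLM M hM) (w : H)‖ := norm_orthProjCLM_le _ _ _
      _ ≤ ‖orthProjCLM N hN - orthProjCLM M hM‖ * ‖(w : H)‖ :=
          ContinuousLinearMap.le_opNorm _ _
      _ = ‖orthProjCLM M hM - orthProjCLM N hN‖ * ‖w‖ := by rw [norm_sub_rev]; rfl
  set Bu : (N →L[𝕜] N)ˣ := Units.oneSub (1 - B) hB with hBu
  have hval : (Bu : N →L[𝕜] N) = B := sub_sub_cancel 1 B
  set w : N := (↑Bu⁻¹ : N →L[𝕜] N) ⟨u, hu⟩ with hw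
  have hBw : B w = ⟨u, hu⟩ := by
    have h1 : ((Bu : N →L[𝕜] N) * (↑Bu⁻¹ : N →L[𝕜] N)) ⟨u, hu⟩ = ⟨u, hu⟩ := by
      rw [Bu.mul_inv]; rfl
    calc B w = ((Bu : N →L[𝕜] N) * (↑Bu⁻¹ : N →L[𝕜] N)) ⟨u, hu⟩ := by rw [hval]; rfl
      _ = ⟨u, hu⟩ := h1
  refine ⟨orthProjCLM M hM (w : H), orthProjCLM_mem _ _ _, ?_⟩
  have : orthProjCLM N hN (orthProjCLM M hM (w : H)) = ((B w : N) : H) := rfl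
  rw [this, hBw]

end aux2

noncomputable def piLpUniformEquiv {ι : Type*} [Fintype ι] (p : ENNReal) [Fact (1 ≤ p)]
    (β : ι → Type*) [∀ i, UniformSpace (β i)] : PiLp p β ≃ᵤ ∀ i, β i where
  toEquiv := WithLp.equiv p (∀ i, β i)
  uniformContinuous_toFun := PiLp.uniformContinuous_ofLp p β
  uniformContinuous_invFun := PiLp.uniformContinuous_toLp p β

/-- stability of the IBAP. If the system `K` (not all of whose
members are zero) has the IBAP with constant
`c = inf ‖x 1 + ... + x n‖ / √(‖x 1‖² + ... + ‖x n‖²)`, and the openings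
`θ(K i, K' i) = ‖P_{K i} - P_{K' i}‖` satisfy `Σ θ(K i, K' i)² < c²`, then the
system `K'` also has the IBAP. -/
theorem stmt_16 {𝕜 H : Type*} [RCLike 𝕜] [NormedAddCommGroup H]
    [InnerProductSpace 𝕜 H] [CompleteSpace H] {n : ℕ}
    (K K' : Fin n → Submodule 𝕜 H)
    (hK : ∀ i, IsClosed ((K i : Set H))) (hK' : ∀ i, IsClosed ((K' i : Set H)))
    (hne : ∃ k, K k ≠ ⊥)
    (hIBAP : IBAP K hK)
    (c : ℝ)
    (hc : c = sInf {r : ℝ | ∃ x : Fin n → H, (∀ i, x i ∈ K i) ∧ x ≠ 0 ∧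
      r = ‖∑ i, x i‖ / Real.sqrt (∑ i, ‖x i‖ ^ 2)})
    (hθ : ∑ i, ‖orthProjCLM (K i) (hK i) - orthProjCLM (K' i) (hK' i)‖ ^ 2
      < c ^ 2) :
    IBAP K' hK' := by
  classical
  haveI : ∀ i, CompleteSpace (K' i) := fun i => (hK' i).completeSpace_coe
  set t : Fin n → ℝ := fun i =>
    ‖orthProjCLM (K i) (hK i) - orthProjCLM (K' i) (hK' i)‖ with ht
  set θ : ℝ := Real.sqrt (∑ i, t i ^ 2) with hθdef
  -- basic facts about c
  obtain ⟨k, hk⟩ := hne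
  obtain ⟨v, hvK, hv0⟩ := (K k).ne_bot_iff.1 hk
  set SS : Set ℝ := {r : ℝ | ∃ x : Fin n → H, (∀ i, x i ∈ K i) ∧ x ≠ 0 ∧
      r = ‖∑ i, x i‖ / Real.sqrt (∑ i, ‖x i‖ ^ 2)} with hSS
  have hcS : c = sInf SS := hc
  have hbdd : BddBelow SS := by
    refine ⟨0, fun r hr => ?_⟩
    obtain ⟨x, -, -, rfl⟩ := hr
    positivity
  have hmem1 : (1:ℝ) ∈ SS := by
    refine ⟨fun i => if i = k then v else 0, fun i => ?_, ?_, ?_⟩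
    · by_cases h : i = k
      · subst h; simpa using hvK
      · simp [h]
    · intro h0
      have h1 := congrFun h0 k
      simp only [if_pos rfl, Pi.zero_apply] at h1
      exact hv0 h1
    · have h1 : ∑ i, (if i = k then v else 0) = v := by
        rw [Finset.sum_ite_eq' Finset.univ k fun _ => v]
        simp
      have h2 : ∑ i, ‖if i = k then v else 0‖ ^ 2 = ‖v‖ ^ 2 := by
        have h3 : ∀ i : Fin n, ‖if i = k then v else 0‖ ^ 2
            = if i = k then ‖v‖ ^ 2 else 0 := by
          intro i; by_cases h : i = k <;> simp [h]
        rw [Finset.sum_congr rfl fun i _ => h3 i,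
          Finset.sum_ite_eq' Finset.univ k fun _ => ‖v‖ ^ 2]
        simp
      rw [h1, h2, Real.sqrt_sq (norm_nonneg v), div_self (norm_ne_zero_iff.2 hv0)]
  have hc1 : c ≤ 1 := hcS ▸ csInf_le hbdd hmem1
  have hc0 : 0 ≤ c := hcS ▸ le_csInf ⟨1, hmem1⟩ (fun r hr => by
    obtain ⟨x, -, -, rfl⟩ := hr; positivity)
  have hθ' : ∑ i, t i ^ 2 < c ^ 2 := hθ
  have hsum0 : 0 ≤ ∑ i, t i ^ 2 := Finset.sum_nonneg fun i _ => sq_nonneg _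
  have hθc : θ < c := by
    have h1 : θ < Real.sqrt (c ^ 2) := Real.sqrt_lt_sqrt hsum0 hθ'
    rwa [Real.sqrt_sq hc0] at h1
  have hlow : ∀ z : Fin n → H, (∀ i, z i ∈ K i) →
      c * Real.sqrt (∑ i, ‖z i‖ ^ 2) ≤ ‖∑ i, z i‖ := by
    intro z hz
    rcases eq_or_ne z 0 with rfl | hz0
    · simp
    · have hmemr : ‖∑ i, z i‖ / Real.sqrt (∑ i, ‖z i‖ ^ 2) ∈ SS := ⟨z, hz, hz0, rfl⟩
      have hcle : c ≤ ‖∑ i, z i‖ / Real.sqrt (∑ i, ‖z i‖ ^ 2) := hcS ▸ csInf_le hbdd hmemr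
      have hpos : 0 < Real.sqrt (∑ i, ‖z i‖ ^ 2) := by
        obtain ⟨j, hj⟩ := Function.ne_iff.1 hz0
        have h4 : (0:ℝ) < ‖z j‖ ^ 2 := pow_pos (norm_pos_iff.2 hj) 2
        exact Real.sqrt_pos.2 (lt_of_lt_of_le h4
          (Finset.single_le_sum (fun i _ => sq_nonneg ‖z i‖) (Finset.mem_univ j)))
      calc c * Real.sqrt (∑ i, ‖z i‖ ^ 2)
          ≤ (‖∑ i, z i‖ / Real.sqrt (∑ i, ‖z i‖ ^ 2)) * Real.sqrt (∑ i, ‖z i‖ ^ 2) :=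
            mul_le_mul_of_nonneg_right hcle hpos.le
        _ = ‖∑ i, z i‖ := div_mul_cancel₀ _ hpos.ne'
  have hti1 : ∀ i, t i < 1 := by
    intro i
    have h1 : t i ^ 2 ≤ ∑ j, t j ^ 2 :=
      Finset.single_le_sum (fun j _ => sq_nonneg (t j)) (Finset.mem_univ i)
    have h2 : t i ≤ θ := by
      rw [hθdef]
      calc t i = Real.sqrt (t i ^ 2) := (Real.sqrt_sq (norm_nonneg _)).symm
        _ ≤ _ := Real.sqrt_le_sqrt h1
    linarith
  have hsurj : ∀ i, ∀ u ∈ K' i, ∃ z ∈ K i, orthProjCLM (K' i) (hK' i) z = u := by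
    intro i u hu
    exact exists_preimage_of_opening_lt (K i) (K' i) (hK i) (hK' i) (hti1 i) hu
  set m : ℝ := c - θ with hm
  have hm0 : 0 < m := sub_pos.2 hθc
  -- key lower bound for K' tuples
  have hSlow : ∀ x : Fin n → H, (∀ i, x i ∈ K' i) →
      m * Real.sqrt (∑ i, ‖x i‖ ^ 2) ≤ ‖∑ i, x i‖ := by
    intro x hx
    choose z hzK hzeq using fun i => hsurj i (x i) (hx i)
    have hxle : ∀ i, ‖x i‖ ≤ ‖z i‖ := fun i => by
      rw [← hzeq i]; exact norm_orthProjCLM_le _ _ _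
    have hdiff : ∀ i, ‖z i - x i‖ ≤ t i * ‖z i‖ := by
      intro i
      have h1 : z i - x i
          = (orthProjCLM (K i) (hK i) - orthProjCLM (K' i) (hK' i)) (z i) := by
        rw [ContinuousLinearMap.sub_apply, orthProjCLM_eq_self _ _ (hzK i), hzeq i]
      rw [h1]
      exact ContinuousLinearMap.le_opNorm _ _
    set N := Real.sqrt (∑ i, ‖z i‖ ^ 2) with hN
    have hN0 : 0 ≤ N := Real.sqrt_nonneg _
    have hNN' : Real.sqrt (∑ i, ‖x i‖ ^ 2) ≤ N :=
      Real.sqrt_le_sqrt (Finset.sum_le_sum fun i _ =>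
        pow_le_pow_left₀ (norm_nonneg _) (hxle i) 2)
    have hCS : ∑ i, t i * ‖z i‖ ≤ θ * N := by
      have h1 : (∑ i, t i * ‖z i‖) ^ 2 ≤ (∑ i, t i ^ 2) * ∑ i, ‖z i‖ ^ 2 :=
        Finset.sum_mul_sq_le_sq_mul_sq _ _ _
      have h2 : 0 ≤ ∑ i, t i * ‖z i‖ :=
        Finset.sum_nonneg fun i _ => mul_nonneg (norm_nonneg _) (norm_nonneg _)
      calc ∑ i, t i * ‖z i‖ = Real.sqrt ((∑ i, t i * ‖z i‖) ^ 2) := (Real.sqrt_sq h2).symm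
        _ ≤ Real.sqrt ((∑ i, t i ^ 2) * ∑ i, ‖z i‖ ^ 2) := Real.sqrt_le_sqrt h1
        _ = θ * N := by rw [Real.sqrt_mul hsum0]
    have hzsum : c * N ≤ ‖∑ i, z i‖ := hlow z hzK
    have hdsum : ‖∑ i, (z i - x i)‖ ≤ θ * N :=
      le_trans (norm_sum_le _ _) (le_trans (Finset.sum_le_sum fun i _ => hdiff i) hCS)
    have htri : ‖∑ i, z i‖ - ‖∑ i, (z i - x i)‖ ≤ ‖∑ i, x i‖ := by
      have h1 : (∑ i, z i) - (∑ i, (z i - x i)) = ∑ i, x i := by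
        rw [← Finset.sum_sub_distrib]
        exact Finset.sum_congr rfl fun i _ => by abel
      calc ‖∑ i, z i‖ - ‖∑ i, (z i - x i)‖
          ≤ ‖(∑ i, z i) - ∑ i, (z i - x i)‖ := norm_sub_norm_le _ _
        _ = ‖∑ i, x i‖ := by rw [h1]
    calc m * Real.sqrt (∑ i, ‖x i‖ ^ 2) ≤ m * N :=
          mul_le_mul_of_nonneg_left hNN' hm0.le
      _ = c * N - θ * N := by rw [hm]; ring
      _ ≤ ‖∑ i, z i‖ - ‖∑ i, (z i - x i)‖ := by linarith
      _ ≤ ‖∑ i, x i‖ := htri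
  -- the Hilbert space E and operators
  let E := PiLp 2 (fun i : Fin n => K' i)
  let Sm : E →L[𝕜] H := ∑ i, (K' i).subtypeL.comp (PiLp.proj 2 (fun i : Fin n => K' i) i)
  have hSm : ∀ x : E, Sm x = ∑ i, ((x i : H)) := by
    intro x
    simp only [Sm, ContinuousLinearMap.sum_apply]
    rfl
  haveI : CompleteSpace E :=
    (piLpUniformEquiv 2 (fun i : Fin n => (K' i : Type _))).completeSpace_iff.2
      inferInstance
  let G : E →L[𝕜] E :=
    ((PiLp.continuousLinearEquiv 2 𝕜 (fun i : Fin n => K' i)).symm :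
        (∀ i, K' i) →L[𝕜] E).comp
      (ContinuousLinearMap.pi fun i => (Submodule.orthogonalProjectionOnto (K' i)).comp Sm)
  have hG : ∀ (x : E) (i : Fin n), ((G x i : K' i) : H)
      = orthProjCLM (K' i) (hK' i) (Sm x) := fun x i => rfl
  -- coercivity
  have hGinner : ∀ x : E, (inner 𝕜 x (G x) : 𝕜) = (‖Sm x‖ : 𝕜) ^ 2 := by
    intro x
    have h1 : (inner 𝕜 x (G x) : 𝕜) = ∑ i, (inner 𝕜 ((x i : H)) ((G x i : K' i) : H) : 𝕜) := by
      rw [PiLp.inner_apply]; rfl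
    rw [h1]
    have h2 : ∀ i : Fin n, (inner 𝕜 ((x i : H)) ((G x i : K' i) : H) : 𝕜)
        = inner 𝕜 ((x i : H)) (Sm x) := by
      intro i
      rw [hG]
      exact inner_orthProjCLM (K' i) (hK' i) (x i).2 (Sm x)
    rw [Finset.sum_congr rfl fun i _ => h2 i, ← sum_inner, ← hSm x,
      inner_self_eq_norm_sq_to_K]
  have hnormE : ∀ x : E, ‖x‖ = Real.sqrt (∑ i, ‖(x i : H)‖ ^ 2) := by
    intro x
    rw [PiLp.norm_eq_of_L2]
    rfl
  have hSmlow : ∀ x : E, m * ‖x‖ ≤ ‖Sm x‖ := by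
    intro x
    rw [hnormE, hSm]
    exact hSlow (fun i => (x i : H)) (fun i => (x i).2)
  have hGlow : ∀ x : E, m ^ 2 * ‖x‖ ≤ ‖G x‖ := by
    intro x
    rcases eq_or_ne x 0 with rfl | hx
    · simp
    have h1 : ‖Sm x‖ ^ 2 ≤ ‖x‖ * ‖G x‖ := by
      have := norm_inner_le_norm (𝕜 := 𝕜) x (G x)
      rw [hGinner x] at this
      calc ‖Sm x‖ ^ 2 = ‖(‖Sm x‖ : 𝕜) ^ 2‖ := by
            rw [norm_pow, RCLike.norm_ofReal, abs_norm]
        _ ≤ ‖x‖ * ‖G x‖ := this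
    have h2 : (m * ‖x‖) ^ 2 ≤ ‖Sm x‖ ^ 2 := by
      have := hSmlow x
      have h3 : 0 ≤ m * ‖x‖ := mul_nonneg hm0.le (norm_nonneg _)
      nlinarith
    have hx0 : 0 < ‖x‖ := norm_pos_iff.2 hx
    nlinarith
  -- G is surjective
  have hrange : LinearMap.range (G : E →ₗ[𝕜] E) = ⊤ := by
    have ha : AntilipschitzWith (Real.toNNReal (m ^ 2))⁻¹ G := by
      refine G.antilipschitz_of_bound fun x => ?_
      rw [NNReal.coe_inv, Real.coe_toNNReal _ (by positivity)]
      rw [inv_mul_eq_div, le_div_iff₀ (by positivity)]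
      calc ‖x‖ * m ^ 2 = m ^ 2 * ‖x‖ := mul_comm _ _
        _ ≤ ‖G x‖ := hGlow x
    have hclosed : IsClosed (Set.range G) := ha.isClosed_range G.uniformContinuous
    have hclosed' : IsClosed ((LinearMap.range (G : E →ₗ[𝕜] E) : Submodule 𝕜 E) : Set E) := by
      rwa [LinearMap.coe_range]
    haveI : CompleteSpace (LinearMap.range (G : E →ₗ[𝕜] E) : Submodule 𝕜 E) := hclosed'.completeSpace_coe
    rw [← Submodule.orthogonal_eq_bot_iff]
    rw [Submodule.eq_bot_iff]
    intro u hu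
    have h0 : (inner 𝕜 (G u) u : 𝕜) = 0 :=
      (Submodule.mem_orthogonal _ u).1 hu (G u) (LinearMap.mem_range_self _ u)
    have h1 : (inner 𝕜 u (G u) : 𝕜) = 0 := inner_eq_zero_symm.1 h0
    rw [hGinner u] at h1
    have h2 : ‖Sm u‖ = 0 := by
      have := sq_eq_zero_iff.1 (by exact_mod_cast h1 : (‖Sm u‖ : 𝕜) ^ 2 = 0)
      exact_mod_cast this
    have h3 := hSmlow u
    rw [h2] at h3
    have : ‖u‖ = 0 := le_antisymm (by nlinarith) (norm_nonneg _)
    exact norm_eq_zero.1 this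
  -- conclude
  intro x hx
  let xE : E := WithLp.toLp 2 (fun i => (⟨x i, hx i⟩ : K' i))
  obtain ⟨w, hw⟩ := (LinearMap.range_eq_top.1 hrange) xE
  refine ⟨Sm w, fun i => ?_⟩
  calc orthProjCLM (K' i) (hK' i) (Sm w) = ((G w i : K' i) : H) := (hG w i).symm
    _ = ((xE i : K' i) : H) := by rw [ContinuousLinearMap.coe_coe] at hw; rw [hw]
    _ = x i := rfl
end

section
/- Let {p_k : k ≥ 1} be a sequence of positive real numbers such that Σ_{k=1}^∞ p_k converges, and set r_k := Σ_{j=k}^∞ p_j. Then the following are equivalent: (1) sup{ r_{k+1}/r_k : k ≥ 1 } < 1; (2) the sequence {r_k / p_k : k ≥ 1} is bounded; (3) the sequence {p_{k+1}/p_k : k ≥ 1} is bounded and there exists a natural number N ≥ 1 such that sup{ p_{k+N}/p_k : k ≥ 1 } < 1. -/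
/-- for a sequence of positive reals `p` with convergent sum and
tails `r k = Σ_{j ≥ k} p j`, the following are equivalent:
(1) `sup_k r (k+1) / r k < 1`;
(2) the sequence `r k / p k` is bounded;
(3) the sequence `p (k+1) / p k` is bounded and there is `N ≥ 1` with
`sup_k p (k+N) / p k < 1`.
(Here the sequence is indexed by `ℕ` starting from `0`.) -/
theorem stmt_18 (p : ℕ → ℝ) (hp : ∀ k, 0 < p k) (hs : Summable p) :
    List.TFAE [
      (⨆ k : ℕ, (∑' j : ℕ, p (k + 1 + j)) / (∑' j : ℕ, p (k + j))) < 1,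
      ∃ C : ℝ, ∀ k, (∑' j : ℕ, p (k + j)) / p k ≤ C,
      (∃ C : ℝ, ∀ k, p (k + 1) / p k ≤ C) ∧
        ∃ N : ℕ, 1 ≤ N ∧ (⨆ k : ℕ, p (k + N) / p k) < 1 ] := by
  have hsum : ∀ k, Summable (fun j => p (k + j)) := fun k =>
    ((summable_nat_add_iff k).2 hs).congr (fun n => by rw [add_comm])
  have hrpos : ∀ k, 0 < ∑' j : ℕ, p (k + j) := fun k =>
    Summable.tsum_pos (hsum k) (fun j => (hp _).le) 0 (hp _)
  have hrec : ∀ k, (∑' j : ℕ, p (k + j)) = p k + ∑' j : ℕ, p (k + 1 + j) := by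
    intro k
    have e1 : (∑' j : ℕ, p (k + (j + 1))) = ∑' j : ℕ, p (k + 1 + j) :=
      tsum_congr fun j => by congr 1; omega
    rw [Summable.tsum_eq_zero_add (hsum k), e1, Nat.add_zero]
  have hple : ∀ k, p k ≤ ∑' j : ℕ, p (k + j) := by
    intro k
    rw [hrec k]
    nlinarith [hrpos (k + 1)]
  have hrmono : ∀ k, (∑' j : ℕ, p (k + 1 + j)) ≤ ∑' j : ℕ, p (k + j) := by
    intro k; rw [hrec k]; nlinarith [hp k]
  -- iterated tail bound
  have tail_iter : ∀ q : ℝ, 0 ≤ q →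
      (∀ k, (∑' j : ℕ, p (k + 1 + j)) ≤ q * ∑' j : ℕ, p (k + j)) →
      ∀ N k, (∑' j : ℕ, p (k + N + j)) ≤ q ^ N * ∑' j : ℕ, p (k + j) := by
    intro q hq h N
    induction N with
    | zero => intro k; simp
    | succ n ih =>
      intro k
      have h1 : (∑' j : ℕ, p (k + (n + 1) + j)) ≤ q * ∑' j : ℕ, p (k + n + j) := by
        have := h (k + n)
        have e : k + n + 1 = k + (n + 1) := by omega
        rwa [e] at this
      calc (∑' j : ℕ, p (k + (n + 1) + j)) ≤ q * ∑' j : ℕ, p (k + n + j) := h1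
        _ ≤ q * (q ^ n * ∑' j : ℕ, p (k + j)) := by
            exact mul_le_mul_of_nonneg_left (ih k) hq
        _ = q ^ (n + 1) * ∑' j : ℕ, p (k + j) := by ring
  tfae_have 1 → 2 := by
    intro h1
    set q := ⨆ k : ℕ, (∑' j : ℕ, p (k + 1 + j)) / (∑' j : ℕ, p (k + j)) with hqdef
    have hbdd : BddAbove (Set.range fun k : ℕ =>
        (∑' j : ℕ, p (k + 1 + j)) / (∑' j : ℕ, p (k + j))) := by
      refine ⟨1, ?_⟩
      rintro x ⟨k, rfl⟩
      exact div_le_one_of_le₀ (hrmono k) (hrpos k).le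
    refine ⟨(1 - q)⁻¹, fun k => ?_⟩
    have hk : (∑' j : ℕ, p (k + 1 + j)) / (∑' j : ℕ, p (k + j)) ≤ q :=
      le_ciSup hbdd k
    have hk' : (∑' j : ℕ, p (k + 1 + j)) ≤ q * ∑' j : ℕ, p (k + j) :=
      (div_le_iff₀ (hrpos k)).1 hk
    have hpk : (1 - q) * (∑' j : ℕ, p (k + j)) ≤ p k := by
      have := hrec k
      nlinarith
    rw [div_le_iff₀ (hp k)]
    rw [inv_mul_eq_div, le_div_iff₀ (by linarith)]
    nlinarith
  tfae_have 2 → 1 := by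
    rintro ⟨C, hC⟩
    have hC1 : 1 ≤ C := le_trans ((one_le_div (hp 0)).2 (hple 0)) (hC 0)
    refine lt_of_le_of_lt (ciSup_le fun k => ?_) (show 1 - C⁻¹ < 1 by
      have : (0:ℝ) < C⁻¹ := inv_pos.2 (by linarith)
      linarith)
    have h1 : (∑' j : ℕ, p (k + j)) ≤ C * p k :=
      (div_le_iff₀ (hp k)).1 (hC k)
    have h2 : C⁻¹ * (∑' j : ℕ, p (k + j)) ≤ p k := by
      rw [inv_mul_eq_div, div_le_iff₀ (by linarith : (0:ℝ) < C)]
      linarith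
    rw [div_le_iff₀ (hrpos k)]
    have := hrec k
    nlinarith
  tfae_have 2 → 3 := by
    rintro ⟨C, hC⟩
    have hC1 : 1 ≤ C := le_trans ((one_le_div (hp 0)).2 (hple 0)) (hC 0)
    have hCpos : (0:ℝ) < C := by linarith
    have hrC : ∀ k, (∑' j : ℕ, p (k + j)) ≤ C * p k := fun k =>
      (div_le_iff₀ (hp k)).1 (hC k)
    constructor
    · refine ⟨C, fun k => ?_⟩
      have : p (k + 1) ≤ ∑' j : ℕ, p (k + j) :=
        le_trans (hple (k + 1)) (hrmono k)
      exact (div_le_iff₀ (hp k)).2 (le_trans this (hrC k))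
    · set q : ℝ := 1 - C⁻¹ with hq
      have hq0 : 0 ≤ q := by
        have : C⁻¹ ≤ 1 := inv_le_one_of_one_le₀ hC1
        simp [hq]; linarith
      have hq1 : q < 1 := by
        have : (0:ℝ) < C⁻¹ := inv_pos.2 hCpos
        simp [hq]; linarith
      have hstep : ∀ k, (∑' j : ℕ, p (k + 1 + j)) ≤ q * ∑' j : ℕ, p (k + j) := by
        intro k
        have h2 : C⁻¹ * (∑' j : ℕ, p (k + j)) ≤ p k := by
          rw [inv_mul_eq_div, div_le_iff₀ hCpos]
          linarith [hrC k]
        have := hrec k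
        simp only [hq]
        nlinarith [hrpos k]
      obtain ⟨N0, hN0⟩ := exists_pow_lt_of_lt_one (inv_pos.2 hCpos) hq1
      refine ⟨max N0 1, le_max_right _ _, ?_⟩
      have hqN : q ^ max N0 1 < C⁻¹ :=
        lt_of_le_of_lt (pow_le_pow_of_le_one hq0 hq1.le (le_max_left _ _)) hN0
      have key : ∀ k, p (k + max N0 1) / p k ≤ q ^ max N0 1 * C := by
        intro k
        rw [div_le_iff₀ (hp k)]
        calc p (k + max N0 1) ≤ ∑' j : ℕ, p (k + max N0 1 + j) := hple _
          _ ≤ q ^ max N0 1 * ∑' j : ℕ, p (k + j) :=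
              tail_iter q hq0 hstep (max N0 1) k
          _ ≤ q ^ max N0 1 * (C * p k) :=
              mul_le_mul_of_nonneg_left (hrC k) (pow_nonneg hq0 _)
          _ = q ^ max N0 1 * C * p k := by ring
      refine lt_of_le_of_lt (ciSup_le key) ?_
      calc q ^ max N0 1 * C < C⁻¹ * C := by
            exact mul_lt_mul_of_pos_right hqN hCpos
        _ = 1 := inv_mul_cancel₀ (ne_of_gt hCpos)
  tfae_have 3 → 2 := by
    rintro ⟨⟨C, hC⟩, N, hN1, hN⟩
    have hCpos : (0:ℝ) < C := lt_of_lt_of_le (div_pos (hp 1) (hp 0)) (hC 0)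
    -- p (k + i) ≤ C ^ i * p k
    have hCiter : ∀ k i, p (k + i) ≤ C ^ i * p k := by
      intro k i
      induction i with
      | zero => simp
      | succ n ih =>
        have h1 : p (k + n + 1) ≤ C * p (k + n) :=
          (div_le_iff₀ (hp (k + n))).1 (hC (k + n))
        have e : k + (n + 1) = k + n + 1 := by omega
        rw [e]
        calc p (k + n + 1) ≤ C * p (k + n) := h1
          _ ≤ C * (C ^ n * p k) := mul_le_mul_of_nonneg_left ih hCpos.le
          _ = C ^ (n + 1) * p k := by ring
    set a : ℝ := ⨆ k : ℕ, p (k + N) / p k with ha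
    have hbdd : BddAbove (Set.range fun k : ℕ => p (k + N) / p k) := by
      refine ⟨C ^ N, ?_⟩
      rintro x ⟨k, rfl⟩
      exact (div_le_iff₀ (hp k)).2 (hCiter k N)
    have haK : ∀ k, p (k + N) ≤ a * p k := fun k =>
      (div_le_iff₀ (hp k)).1 (le_ciSup hbdd k)
    have ha0 : 0 ≤ a := le_trans (div_pos (hp N) (hp 0)).le
      (by simpa using le_ciSup hbdd 0)
    -- p (k + (m * N + i)) ≤ a ^ m * (C ^ i * p k)
    have keybound : ∀ k m i, p (k + (m * N + i)) ≤ a ^ m * (C ^ i * p k) := by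
      intro k m
      induction m with
      | zero => intro i; simpa using hCiter k i
      | succ n ih =>
        intro i
        have e : k + ((n + 1) * N + i) = (k + (n * N + i)) + N := by ring
        rw [e]
        calc p ((k + (n * N + i)) + N) ≤ a * p (k + (n * N + i)) := haK _
          _ ≤ a * (a ^ n * (C ^ i * p k)) :=
              mul_le_mul_of_nonneg_left (ih i) ha0
          _ = a ^ (n + 1) * (C ^ i * p k) := by ring
    set S : ℝ := ∑ i ∈ Finset.range N, C ^ i with hS
    have hSnn : 0 ≤ S := Finset.sum_nonneg fun i _ => pow_nonneg hCpos.le i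
    -- finite block sums
    have block : ∀ k m, (∑ j ∈ Finset.range (m * N), p (k + j)) ≤
        (∑ t ∈ Finset.range m, a ^ t) * (S * p k) := by
      intro k m
      induction m with
      | zero => simp
      | succ n ih =>
        have e : (n + 1) * N = n * N + N := by ring
        rw [e, Finset.sum_range_add, Finset.sum_range_succ, add_mul]
        refine add_le_add ih ?_
        calc (∑ i ∈ Finset.range N, p (k + (n * N + i)))
            ≤ ∑ i ∈ Finset.range N, a ^ n * (C ^ i * p k) :=
              Finset.sum_le_sum fun i _ => keybound k n i
          _ = a ^ n * (S * p k) := by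
              rw [hS, Finset.sum_mul, Finset.mul_sum]
    have hgeo : ∀ m, (∑ t ∈ Finset.range m, a ^ t) ≤ (1 - a)⁻¹ := by
      intro m
      have := Summable.sum_le_tsum (Finset.range m) (fun i _ => pow_nonneg ha0 i)
        (summable_geometric_of_lt_one ha0 hN)
      rwa [tsum_geometric_of_lt_one ha0 hN] at this
    refine ⟨(1 - a)⁻¹ * S, fun k => ?_⟩
    rw [div_le_iff₀ (hp k)]
    refine Summable.tsum_le_of_sum_le (hsum k) fun s => ?_
    have hsub : s ⊆ Finset.range ((s.sup id + 1) * N) := by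
      intro x hx
      simp only [Finset.mem_range]
      have h1 : x ≤ s.sup id := Finset.le_sup (f := id) hx
      have h2 : 1 ≤ N := hN1
      nlinarith
    calc (∑ j ∈ s, p (k + j))
        ≤ ∑ j ∈ Finset.range ((s.sup id + 1) * N), p (k + j) :=
          Finset.sum_le_sum_of_subset_of_nonneg hsub fun i _ _ => (hp _).le
      _ ≤ (∑ t ∈ Finset.range (s.sup id + 1), a ^ t) * (S * p k) := block k _
      _ ≤ (1 - a)⁻¹ * (S * p k) := by
          exact mul_le_mul_of_nonneg_right (hgeo _)
            (mul_nonneg hSnn (hp k).le)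
      _ = (1 - a)⁻¹ * S * p k := by ring
  tfae_finish
end

section
/- Let (Ω, 𝓕, μ) be a probability space and 𝓕_1, ..., 𝓕_n sub-σ-algebras of 𝓕. Suppose there exists α > 0 such that μ(A_1 ∩ ... ∩ A_n) ≥ α μ(A_1)···μ(A_n) for arbitrary A_1 ∈ 𝓕_1, ..., A_n ∈ 𝓕_n. Then the collection 𝓕_1, ..., 𝓕_n possesses the inverse marginal property: for arbitrary random variables ξ_1, ..., ξ_n such that ξ_k is 𝓕_k-measurable with E|ξ_k|² < ∞ for each k, and Eξ_1 = Eξ_2 = ... = Eξ_n, there exists a random variable ξ with E|ξ|² < ∞ and E(ξ | 𝓕_k) = ξ_k almost everywhere for all k = 1, ..., n. -/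
set_option linter.unusedSectionVars false
set_option maxHeartbeats 1000000

open MeasureTheory Set MeasurableSpace
open scoped ENNReal NNReal


open MeasureTheory Set MeasurableSpace
open scoped symmDiff

namespace Stmt19Aux

variable {ι : Type*} [Fintype ι] [LinearOrder ι] {X : ι → Type*} [∀ i, MeasurableSpace (X i)]

/-- measurable boxes -/
def Rect (X : ι → Type*) [∀ i, MeasurableSpace (X i)] : Set (Set (∀ i, X i)) :=
  pi univ '' pi univ fun i => { s : Set (X i) | MeasurableSet s }

lemma mem_rect_iff {R : Set (∀ i, X i)} :
    R ∈ Rect X ↔ ∃ A : ∀ i, Set (X i), (∀ i, MeasurableSet (A i)) ∧ univ.pi A = R := by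
  constructor
  · rintro ⟨A, hA, rfl⟩
    exact ⟨A, fun i => hA i (mem_univ i), rfl⟩
  · rintro ⟨A, hA, rfl⟩
    exact ⟨A, fun i _ => hA i, rfl⟩

lemma rect_measurableSet {R : Set (∀ i, X i)} (hR : R ∈ Rect X) : MeasurableSet R := by
  rcases mem_rect_iff.1 hR with ⟨A, hA, rfl⟩
  exact MeasurableSet.univ_pi hA

lemma univ_mem_rect : (univ : Set (∀ i, X i)) ∈ Rect X :=
  mem_rect_iff.2 ⟨fun _ => univ, fun _ => MeasurableSet.univ, by simp⟩

lemma rect_inter {R T : Set (∀ i, X i)} (hR : R ∈ Rect X) (hT : T ∈ Rect X) :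
    R ∩ T ∈ Rect X := by
  rcases mem_rect_iff.1 hR with ⟨A, hA, rfl⟩
  rcases mem_rect_iff.1 hT with ⟨B, hB, rfl⟩
  exact mem_rect_iff.2 ⟨fun i => A i ∩ B i, fun i => (hA i).inter (hB i),
    by rw [pi_inter_distrib]⟩

/-- finite disjoint unions of boxes -/
def DU (X : ι → Type*) [∀ i, MeasurableSpace (X i)] : Set (Set (∀ i, X i)) :=
  {s | ∃ 𝒮 : Set (Set (∀ i, X i)), 𝒮.Finite ∧ 𝒮 ⊆ Rect X ∧ 𝒮.Pairwise Disjoint ∧ s = ⋃₀ 𝒮}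

lemma rect_subset_DU : Rect X ⊆ DU X := fun R hR =>
  ⟨{R}, finite_singleton R, by simpa using hR, pairwise_singleton R Disjoint,
    (sUnion_singleton R).symm⟩

lemma empty_mem_DU : (∅ : Set (∀ i, X i)) ∈ DU X :=
  ⟨∅, finite_empty, empty_subset _, pairwise_empty _, by simp⟩

lemma DU_inter {s t : Set (∀ i, X i)} (hs : s ∈ DU X) (ht : t ∈ DU X) : s ∩ t ∈ DU X := by
  rcases hs with ⟨𝒮, h𝒮f, h𝒮r, h𝒮d, rfl⟩
  rcases ht with ⟨𝒯, h𝒯f, h𝒯r, h𝒯d, rfl⟩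
  refine ⟨image2 (· ∩ ·) 𝒮 𝒯, h𝒮f.image2 _ h𝒯f, ?_, ?_, ?_⟩
  · rintro u ⟨a, ha, b, hb, rfl⟩
    exact rect_inter (h𝒮r ha) (h𝒯r hb)
  · rintro u ⟨a, ha, b, hb, rfl⟩ v ⟨c, hc, d, hd, rfl⟩ hne
    rcases eq_or_ne a c with rfl | hac
    · rcases eq_or_ne b d with rfl | hbd
      · exact absurd rfl hne
      · exact Disjoint.mono inter_subset_right inter_subset_right (h𝒯d hb hd hbd)
    · exact Disjoint.mono inter_subset_left inter_subset_left (h𝒮d ha hc hac)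
  · ext x
    simp only [mem_inter_iff, mem_sUnion, mem_image2]
    constructor
    · rintro ⟨⟨a, ha, hxa⟩, ⟨b, hb, hxb⟩⟩
      exact ⟨a ∩ b, ⟨a, ha, b, hb, rfl⟩, hxa, hxb⟩
    · rintro ⟨u, ⟨a, ha, b, hb, rfl⟩, hxa, hxb⟩
      exact ⟨⟨a, ha, hxa⟩, ⟨b, hb, hxb⟩⟩

lemma rect_compl_mem_DU {R : Set (∀ i, X i)} (hR : R ∈ Rect X) : Rᶜ ∈ DU X := by
  classical
  rcases mem_rect_iff.1 hR with ⟨A, hA, rfl⟩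
  set P : ι → Set (∀ i, X i) := fun j =>
    univ.pi (fun k => if k < j then A k else if k = j then (A k)ᶜ else univ) with hP
  have hdisj : ∀ i j, i < j → Disjoint (P i) (P j) := by
    intro i j hij
    rw [Set.disjoint_left]
    intro x hxi hxj
    have h1 := hxi i (mem_univ i)
    have h2 := hxj i (mem_univ i)
    dsimp only at h1 h2
    rw [if_neg (lt_irrefl i), if_pos rfl] at h1
    rw [if_pos hij] at h2
    exact h1 h2
  refine ⟨range P, finite_range P, ?_, ?_, ?_⟩
  · rintro u ⟨j, rfl⟩
    refine mem_rect_iff.2 ⟨_, fun k => ?_, rfl⟩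
    split_ifs
    · exact hA k
    · exact (hA k).compl
    · exact MeasurableSet.univ
  · rintro u ⟨i, rfl⟩ v ⟨j, rfl⟩ hne
    have hij : i ≠ j := by rintro rfl; exact hne rfl
    rcases hij.lt_or_gt with h | h
    · exact hdisj i j h
    · exact (hdisj j i h).symm
  · rw [sUnion_range]
    ext x
    constructor
    · intro hx
      have hx' : ∃ j, x j ∉ A j := by
        by_contra hno
        push_neg at hno
        exact hx fun j _ => hno j
      have hne : (Finset.univ.filter (fun k => x k ∉ A k)).Nonempty := by
        rcases hx' with ⟨j, hj⟩
        exact ⟨j, Finset.mem_filter.2 ⟨Finset.mem_univ j, hj⟩⟩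
      set j := (Finset.univ.filter (fun k => x k ∉ A k)).min' hne with hjdef
      have hjmem : x j ∉ A j :=
        (Finset.mem_filter.1 ((Finset.univ.filter (fun k => x k ∉ A k)).min'_mem hne)).2
      rw [mem_iUnion]
      refine ⟨j, fun k _ => ?_⟩
      dsimp only
      split_ifs with h1 h2
      · by_contra hk
        have : j ≤ k := Finset.min'_le _ _ (Finset.mem_filter.2 ⟨Finset.mem_univ k, hk⟩)
        exact absurd h1 (not_lt.2 this)
      · subst h2; exact hjmem
      · exact mem_univ _
    · intro hx
      rw [mem_iUnion] at hx
      rcases hx with ⟨j, hj⟩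
      intro hxA
      have := hj j (mem_univ j)
      dsimp only at this
      rw [if_neg (lt_irrefl j), if_pos rfl] at this
      exact this (hxA j (mem_univ j))

lemma sUnion_compl_mem_DU (T : Finset (Set (∀ i, X i))) :
    ↑T ⊆ Rect X → (⋃₀ (T : Set (Set (∀ i, X i))))ᶜ ∈ DU X := by
  classical
  induction T using Finset.induction_on with
  | empty => intro _; simpa using rect_subset_DU univ_mem_rect
  | @insert a T ha ih =>
    intro hins
    rw [Finset.coe_insert, sUnion_insert, compl_union]
    exact DU_inter (rect_compl_mem_DU (hins (by simp)))
      (ih (fun u hu => hins (by simp [hu])))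

lemma DU_compl {s : Set (∀ i, X i)} (hs : s ∈ DU X) : sᶜ ∈ DU X := by
  rcases hs with ⟨𝒮, h𝒮f, h𝒮r, -, rfl⟩
  have := sUnion_compl_mem_DU (X := X) h𝒮f.toFinset (by rwa [h𝒮f.coe_toFinset])

  rwa [h𝒮f.coe_toFinset] at this

lemma DU_union {s t : Set (∀ i, X i)} (hs : s ∈ DU X) (ht : t ∈ DU X) : s ∪ t ∈ DU X := by
  have : s ∪ t = (sᶜ ∩ tᶜ)ᶜ := by rw [compl_inter, compl_compl, compl_compl]
  rw [this]
  exact DU_compl (DU_inter (DU_compl hs) (DU_compl ht))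

lemma generateSetAlgebra_rect_subset_DU :
    generateSetAlgebra (Rect X) ⊆ DU X := by
  intro s hs
  induction hs with
  | base u hu => exact rect_subset_DU hu
  | empty => exact empty_mem_DU
  | compl u _ ih => exact DU_compl ih
  | union u v _ _ ihu ihv => exact DU_union ihu ihv

/-- If a finite measure is dominated by another on all measurable boxes,
then it is dominated everywhere. -/
lemma measure_le_of_le_boxes (ρ ν : Measure (∀ i, X i))
    [IsFiniteMeasure ρ] [IsFiniteMeasure ν]
    (h : ∀ A : ∀ i, Set (X i), (∀ i, MeasurableSet (A i)) → ρ (univ.pi A) ≤ ν (univ.pi A)) :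
    ρ ≤ ν := by
  have hrect : ∀ R ∈ Rect X, ρ R ≤ ν R := by
    intro R hR
    rcases mem_rect_iff.1 hR with ⟨A, hA, rfl⟩
    exact h A hA
  have hDU : ∀ s ∈ DU X, ρ s ≤ ν s := by
    rintro s ⟨𝒮, h𝒮f, h𝒮r, h𝒮d, rfl⟩
    rw [measure_sUnion h𝒮f.countable h𝒮d (fun t ht => rect_measurableSet (h𝒮r ht)),
      measure_sUnion h𝒮f.countable h𝒮d (fun t ht => rect_measurableSet (h𝒮r ht))]
    exact ENNReal.tsum_le_tsum (fun t => hrect t.1 (h𝒮r t.2))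
  have halg : ∀ t ∈ generateSetAlgebra (Rect X), ρ t ≤ ν t :=
    fun t ht => hDU t (generateSetAlgebra_rect_subset_DU ht)
  have hgen : (MeasurableSpace.pi : MeasurableSpace (∀ i, X i)) =
      generateFrom (generateSetAlgebra (Rect X)) := by
    rw [generateFrom_generateSetAlgebra_eq]
    exact (generateFrom_pi).symm
  have dense := Measure.MeasureDense.of_generateFrom_isSetAlgebra_finite (μ := ρ + ν)
    isSetAlgebra_generateSetAlgebra hgen
  rw [Measure.le_iff]
  intro s hs
  refine ENNReal.le_of_forall_pos_le_add fun ε hε _ => ?_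
  obtain ⟨t, ht, hst⟩ := dense.approx s hs (measure_ne_top _ s) ((ε : ℝ) / 2)
    (by positivity)
  have h1 : ρ s ≤ ρ t + (ρ + ν) (s ∆ t) := by
    refine le_trans (measure_mono (fun x hx => ?_)) ((measure_union_le t (s ∆ t)).trans ?_)
    · by_cases hxt : x ∈ t
      · exact Or.inl hxt
      · exact Or.inr (Or.inl ⟨hx, hxt⟩)
    · exact add_le_add_right (by rw [Measure.add_apply]; exact le_add_right le_rfl) _
  have h2 : ρ t ≤ ν t := halg t ht
  have h3 : ν t ≤ ν s + (ρ + ν) (s ∆ t) := by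
    refine le_trans (measure_mono (fun x hx => ?_)) ((measure_union_le s (s ∆ t)).trans ?_)
    · by_cases hxs : x ∈ s
      · exact Or.inl hxs
      · exact Or.inr (Or.inr ⟨hx, hxs⟩)
    · exact add_le_add_right (by rw [Measure.add_apply]; exact le_add_left le_rfl) _
  have hε2 : (ρ + ν) (s ∆ t) ≤ ENNReal.ofReal ((ε : ℝ) / 2) := hst.le
  calc ρ s ≤ ρ t + (ρ + ν) (s ∆ t) := h1
    _ ≤ ν s + (ρ + ν) (s ∆ t) + (ρ + ν) (s ∆ t) := by
        refine add_le_add_left (h2.trans h3) _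
    _ ≤ ν s + ENNReal.ofReal ((ε : ℝ) / 2) + ENNReal.ofReal ((ε : ℝ) / 2) := by
        gcongr
    _ = ν s + ENNReal.ofReal (ε : ℝ) := by
        rw [add_assoc, ← ENNReal.ofReal_add (by positivity) (by positivity)]
        norm_num
    _ = ν s + ε := by rw [ENNReal.ofReal_coe_nnreal]

end Stmt19Aux

section Cop

universe u

/-- A copy of `Ω` carrying the `k`-th σ-algebra and the trimmed measure as volume. -/
def SCop {Ω : Type u} [m0 : MeasurableSpace Ω] {n : ℕ} (F : Fin n → MeasurableSpace Ω)
    (hF : ∀ k, F k ≤ m0) (μ : Measure Ω) (_k : Fin n) : Type u := Ω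

noncomputable instance SCop.instMeasureSpace {Ω : Type u} [m0 : MeasurableSpace Ω] {n : ℕ}
    {F : Fin n → MeasurableSpace Ω} {hF : ∀ k, F k ≤ m0} {μ : Measure Ω} {k : Fin n} :
    MeasureSpace (SCop F hF μ k) :=
  { toMeasurableSpace := F k
    volume := μ.trim (hF k) }

lemma SCop.volume_eq {Ω : Type u} [m0 : MeasurableSpace Ω] {n : ℕ}
    {F : Fin n → MeasurableSpace Ω} {hF : ∀ k, F k ≤ m0} {μ : Measure Ω} {k : Fin n} :
    (volume : Measure (SCop F hF μ k)) = μ.trim (hF k) := rfl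

instance SCop.instIsProbabilityMeasure {Ω : Type u} [m0 : MeasurableSpace Ω] {n : ℕ}
    {F : Fin n → MeasurableSpace Ω} {hF : ∀ k, F k ≤ m0} {μ : Measure Ω}
    [IsProbabilityMeasure μ] {k : Fin n} :
    IsProbabilityMeasure (volume : Measure (SCop F hF μ k)) := by
  constructor
  exact (trim_measurableSet_eq (hF k) MeasurableSet.univ).trans measure_univ

end Cop

theorem stmt_19_main {Ω : Type*} [m0 : MeasurableSpace Ω] (μ : Measure Ω)
    [IsProbabilityMeasure μ] {n : ℕ} (hn : 0 < n)
    (F : Fin n → MeasurableSpace Ω) (hF : ∀ k, F k ≤ m0)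
    (α : ℝ) (hα : 0 < α)
    (hdom : ∀ A : Fin n → Set Ω, (∀ k, MeasurableSet[F k] (A k)) →
      ENNReal.ofReal α * ∏ k, μ (A k) ≤ μ (⋂ k, A k))
    (ξ : Fin n → Ω → ℝ)
    (hξm : ∀ k, Measurable[F k] (ξ k))
    (hξ2 : ∀ k, MemLp (ξ k) 2 μ)
    (hmean : ∀ k l, ∫ ω, ξ k ω ∂μ = ∫ ω, ξ l ω ∂μ) :
    ∃ ξ₀ : Ω → ℝ, MemLp ξ₀ 2 μ ∧
      ∀ k, MeasureTheory.condExp (F k) μ ξ₀ =ᵐ[μ] ξ k := by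
  classical
  set k0 : Fin n := ⟨0, hn⟩ with hk0
  set c : ℝ := ∫ ω, ξ k0 ω ∂μ with hc
  have hmeanl : ∀ l, ∫ ω, ξ l ω ∂μ = c := fun l => hmean l k0
  -- the product space of copies
  set Y : Fin n → Type _ := SCop F hF μ with hY
  set diag : Ω → (∀ k, Y k) := fun ω _ => ω with hdiagdef
  have hdiag : Measurable diag :=
    measurable_pi_lambda _ (fun k => measurable_id'' (hF k))
  set lam : Measure (∀ k, Y k) := μ.map diag with hlam
  haveI : IsProbabilityMeasure lam := Measure.isProbabilityMeasure_map hdiag.aemeasurable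
  set π : Measure (∀ k, Y k) := volume with hπ
  haveI hπprob : IsProbabilityMeasure π := by
    rw [hπ, volume_pi]
    infer_instance
  -- domination on boxes, hence everywhere
  haveI hsmulfin : IsFiniteMeasure (ENNReal.ofReal α • π) := by
    constructor
    rw [Measure.smul_apply, smul_eq_mul]
    exact ENNReal.mul_lt_top ENNReal.ofReal_lt_top (measure_lt_top _ _)
  have hle : (ENNReal.ofReal α • π) ≤ lam := by
    refine Stmt19Aux.measure_le_of_le_boxes _ _ (fun A hA => ?_)
    have hπA : π (univ.pi A) = ∏ k, μ (A k) := by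
      rw [hπ, volume_pi, Measure.pi_pi]
      refine Finset.prod_congr rfl (fun k _ => ?_)
      exact trim_measurableSet_eq (hF k) (hA k)
    have hlamA : lam (univ.pi A) = μ (⋂ k, (A k : Set Ω)) := by
      rw [hlam, Measure.map_apply hdiag (MeasurableSet.univ_pi hA)]
      congr 1
      ext ω
      exact ⟨fun h => mem_iInter.2 fun k => h k (mem_univ k), fun h k _ => mem_iInter.1 h k⟩
    rw [Measure.smul_apply, smul_eq_mul, hπA, hlamA]
    exact hdom A hA
  have hle' : ∀ S : Set (∀ k, Y k), MeasurableSet S →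
      ENNReal.ofReal α * π S ≤ lam S := by
    intro S hS
    have := Measure.le_iff.1 hle S hS
    simpa [Measure.smul_apply] using this
  have hαne : ENNReal.ofReal α ≠ 0 := by
    simp only [ne_eq, ENNReal.ofReal_eq_zero, not_le]
    exact hα
  have hac : π ≪ lam := by
    refine Measure.AbsolutelyContinuous.mk (fun S hS hS0 => ?_)
    have h1 := hle' S hS
    rw [hS0] at h1
    have h2 : ENNReal.ofReal α * π S = 0 := le_antisymm h1 zero_le
    exact (mul_eq_zero.mp h2).resolve_left hαne
  set g : (∀ k, Y k) → ℝ≥0∞ := π.rnDeriv lam with hg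
  have hgmeas : Measurable g := Measure.measurable_rnDeriv _ _
  have hgle : g ≤ᵐ[lam] fun _ => (ENNReal.ofReal α)⁻¹ := by
    refine ae_le_of_forall_setLIntegral_le_of_sigmaFinite hgmeas (fun S hS h'S => ?_)
    rw [hg, Measure.setLIntegral_rnDeriv hac, setLIntegral_const]
    calc π S = (ENNReal.ofReal α)⁻¹ * (ENNReal.ofReal α * π S) := by
          rw [← mul_assoc, ENNReal.inv_mul_cancel hαne ENNReal.ofReal_ne_top, one_mul]
    _ ≤ (ENNReal.ofReal α)⁻¹ * lam S := by
          gcongr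
          exact hle' S hS
  have hGbd : ∀ᵐ ω ∂μ, g (diag ω) ≤ (ENNReal.ofReal α)⁻¹ := by
    have hset : MeasurableSet {x : ∀ k, Y k | g x ≤ (ENNReal.ofReal α)⁻¹} :=
      measurableSet_le hgmeas measurable_const
    exact (ae_map_iff hdiag.aemeasurable hset).1 hgle
  set G : Ω → ℝ := fun ω => (g (diag ω)).toReal with hG
  have hGmeas : Measurable G := (hgmeas.comp hdiag).ennreal_toReal
  have hGtoReal : ∀ᵐ ω ∂μ, G ω ≤ α⁻¹ := by
    filter_upwards [hGbd] with ω hω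
    have h1 : ((ENNReal.ofReal α)⁻¹).toReal = α⁻¹ := by
      rw [ENNReal.toReal_inv, ENNReal.toReal_ofReal hα.le]
    rw [hG, ← h1]
    exact ENNReal.toReal_mono (ENNReal.inv_ne_top.2 hαne) hω
  set η : Ω → ℝ := fun ω => (∑ l, ξ l ω) - ((n : ℝ) - 1) * c with hη
  have hηmeas : Measurable η := by
    apply Measurable.sub
    · exact Finset.measurable_sum _ (fun l _ => (hξm l).mono (hF l) le_rfl)
    · exact measurable_const
  have hη2 : MemLp η 2 μ := by
    have h1 : MemLp (fun ω => ∑ l, ξ l ω) 2 μ := by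
      have h := memLp_finset_sum' (μ := μ) (p := 2) Finset.univ (fun l _ => hξ2 l)
      have heq : (fun ω => ∑ l, ξ l ω) = (∑ l, ξ l : Ω → ℝ) := by
        funext ω; simp
      rw [heq]; exact h
    have h2 : MemLp (fun _ : Ω => ((n : ℝ) - 1) * c) 2 μ := memLp_const _
    exact h1.sub h2
  set ξ₀ : Ω → ℝ := fun ω => G ω * η ω with hξ₀def
  have hξ₀meas : Measurable ξ₀ := hGmeas.mul hηmeas
  have hξ₀2 : MemLp ξ₀ 2 μ := by
    refine MemLp.of_le (hη2.const_mul (α⁻¹)) hξ₀meas.aestronglyMeasurable ?_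
    filter_upwards [hGtoReal] with ω hω
    rw [Real.norm_eq_abs, Real.norm_eq_abs, hξ₀def, abs_mul, abs_mul]
    have hGnn : 0 ≤ G ω := ENNReal.toReal_nonneg
    have h1 : |G ω| = G ω := abs_of_nonneg hGnn
    have h2 : |α⁻¹| = α⁻¹ := abs_of_nonneg (by positivity)
    rw [h1, h2]
    exact mul_le_mul_of_nonneg_right hω (abs_nonneg _)
  have hξ₀int : Integrable ξ₀ μ := hξ₀2.integrable one_le_two
  -- transfer identity
  have transfer : ∀ f : (∀ k, Y k) → ℝ, Measurable f →
      ∫ x, f x ∂π = ∫ ω, G ω * f (diag ω) ∂μ := by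
    intro f hf
    have h1 : ∫ x, f x ∂π = ∫ x, (g x).toReal • f x ∂lam := by
      rw [hg, integral_rnDeriv_smul hac]
    rw [h1, hlam, integral_map hdiag.aemeasurable]
    · simp only [smul_eq_mul, hG]
    · exact (hgmeas.ennreal_toReal.aestronglyMeasurable.smul
        hf.aestronglyMeasurable)
  refine ⟨ξ₀, hξ₀2, fun k => ?_⟩
  haveI : IsFiniteMeasure (μ.trim (hF k)) := by
    constructor
    rw [trim_measurableSet_eq (hF k) MeasurableSet.univ]
    exact measure_lt_top μ _
  refine (ae_eq_condExp_of_forall_setIntegral_eq (hF k) hξ₀int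
    (fun s _ _ => ((hξ2 k).integrable one_le_two).integrableOn)
    (fun s hs hμs => ?_)
    (StronglyMeasurable.aestronglyMeasurable ((hξm k).stronglyMeasurable))).symm
  -- the main computation : ∫ x in s, ξ k ∂μ = ∫ x in s, ξ₀ ∂μ
  have hms : MeasurableSet s := hF k s hs
  set e : Ω → ℝ := s.indicator (fun _ => (1 : ℝ)) with he
  have he_sm : StronglyMeasurable[F k] e :=
    (@stronglyMeasurable_const Ω ℝ (F k) _ _).indicator hs
  have he_int : Integrable e μ := (integrable_const (1 : ℝ)).indicator hms
  have he_integral : ∫ ω, e ω ∂μ = (μ s).toReal := by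
    rw [he, integral_indicator_const (1 : ℝ) hms, smul_eq_mul, mul_one]; rfl
  set q : Fin n → Ω → ℝ := fun j x => if j = k then e x else 1 with hq
  set p : Fin n → Fin n → Ω → ℝ :=
    fun l j x => q j x * (if j = l then ξ l x else 1) with hp
  have hq_sm : ∀ j, StronglyMeasurable[F j] (q j) := by
    intro j
    by_cases hj : j = k
    · subst hj
      simpa [hq] using he_sm
    · simp only [hq, if_neg hj]
      exact @stronglyMeasurable_const Ω ℝ (F j) _ _
  have hp_sm : ∀ l j, StronglyMeasurable[F j] (p l j) := by
    intro l j
    refine (hq_sm j).mul ?_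
    by_cases hj : j = l
    · subst hj
      simpa using (hξm j).stronglyMeasurable
    · simp only [if_neg hj]
      exact @stronglyMeasurable_const Ω ℝ (F j) _ _
  have hp_intμ : ∀ l j, Integrable (p l j) μ := by
    intro l j
    by_cases hjk : j = k
    · subst hjk
      by_cases hjl : j = l
      · subst hjl
        have hrw : p j j = s.indicator (ξ j) := by
          funext x
          by_cases hx : x ∈ s <;> simp [hp, hq, he, indicator, hx]
        rw [hrw]
        exact ((hξ2 j).integrable one_le_two).indicator hms
      · have hrw : p l j = e := by
          funext x; simp [hp, hq, if_neg hjl]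
        rw [hrw]; exact he_int
    · by_cases hjl : j = l
      · subst hjl
        have hrw : p j j = ξ j := by
          funext x; simp [hp, hq, if_neg hjk]
        rw [hrw]; exact (hξ2 j).integrable one_le_two
      · have hrw : p l j = fun _ => (1 : ℝ) := by
          funext x; simp [hp, hq, if_neg hjk, if_neg hjl]
        rw [hrw]; exact integrable_const _
  have hp_int : ∀ l j, Integrable (p l j) (volume : Measure (Y j)) := fun l j =>
    Integrable.trim (hF j) (hp_intμ l j) (hp_sm l j)
  -- values of the coordinate integrals
  have hJ : ∀ l j, ∫ x : Y j, p l j x ∂volume = ∫ x, p l j x ∂μ := by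
    intro l j
    rw [SCop.volume_eq]
    exact (integral_trim (hF j) (hp_sm l j)).symm
  have hJk : ∫ x : Y k, p k k x ∂volume = ∫ x in s, ξ k x ∂μ := by
    rw [hJ]
    have hrw : p k k = s.indicator (ξ k) := by
      funext x
      by_cases hx : x ∈ s <;> simp [hp, hq, he, indicator, hx]
    rw [hrw, integral_indicator hms]
  have hJ1 : ∀ l j, j ≠ k → j ≠ l → ∫ x : Y j, p l j x ∂volume = 1 := by
    intro l j hjk hjl
    rw [hJ]
    have hrw : p l j = fun _ => (1 : ℝ) := by
      funext x; simp [hp, hq, if_neg hjk, if_neg hjl]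
    rw [hrw, integral_const]
    simp
  have hJe : ∀ l, l ≠ k → ∫ x : Y k, p l k x ∂volume = (μ s).toReal := by
    intro l hlk
    rw [hJ]
    have hrw : p l k = e := by
      funext x; simp [hp, hq, if_neg (Ne.symm hlk)]
    rw [hrw, he_integral]
  have hJl : ∀ l, l ≠ k → ∫ x : Y l, p l l x ∂volume = c := by
    intro l hlk
    rw [hJ]
    have hrw : p l l = ξ l := by
      funext x; simp [hp, hq, if_neg hlk]
    rw [hrw]
    exact hmeanl l
  -- the function on the product space
  set f : (∀ k, Y k) → ℝ := fun x =>
    (∑ l, ∏ j, p l j (x j)) - ((n : ℝ) - 1) * c * (∏ j, q j (x j)) with hf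
  have hfmeas : Measurable f := by
    apply Measurable.sub
    · apply Finset.measurable_sum
      intro l _
      apply Finset.measurable_prod
      intro j _
      exact ((hp_sm l j).measurable.mono le_rfl le_rfl).comp (measurable_pi_apply j)
    · apply Measurable.const_mul
      apply Finset.measurable_prod
      intro j _
      exact ((hq_sm j).measurable.mono le_rfl le_rfl).comp (measurable_pi_apply j)
  -- integrability over π
  have hprod_int : ∀ l, Integrable (fun x : ∀ k, Y k => ∏ j, p l j (x j)) π := by
    intro l
    rw [hπ]
    exact Integrable.fintype_prod_dep (fun j => hp_int l j)
  have hq_int : ∀ j, Integrable (q j) (volume : Measure (Y j)) := by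
    intro j
    refine Integrable.trim (hF j) ?_ (hq_sm j)
    by_cases hj : j = k
    · subst hj; simpa [hq] using he_int
    · simp only [hq, if_neg hj]; exact integrable_const _
  have hqprod_int : Integrable (fun x : ∀ k, Y k => ∏ j, q j (x j)) π := by
    rw [hπ]
    exact Integrable.fintype_prod_dep (fun j => hq_int j)
  have hf_int : Integrable f π := by
    rw [hf]
    exact (integrable_finset_sum _ (fun l _ => hprod_int l)).sub (hqprod_int.const_mul _)
  -- compute ∫ f dπ
  have hsum_val : ∫ x, f x ∂π =
      (∑ l, ∏ j, ∫ x : Y j, p l j x ∂volume)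
        - ((n : ℝ) - 1) * c * ∏ j, ∫ x : Y j, q j x ∂volume := by
    rw [hf, integral_sub (integrable_finset_sum _ (fun l _ => hprod_int l))
      (hqprod_int.const_mul _), integral_finset_sum _ (fun l _ => hprod_int l),
      integral_const_mul _ _]
    congr 1
    · refine Finset.sum_congr rfl (fun l _ => ?_)
      rw [hπ]
      exact integral_fintype_prod_eq_prod (E := Y) (fun j => p l j)
    · congr 1
      rw [hπ]
      exact integral_fintype_prod_eq_prod (E := Y) (fun j => q j)
  have hJq : ∀ j, ∫ x : Y j, q j x ∂volume = ∫ x, q j x ∂μ := fun j =>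
    (integral_trim (hF j) (hq_sm j) :
      ∫ x, q j x ∂μ = ∫ x : Y j, q j x ∂volume).symm
  have hqprod_val : ∏ j, ∫ x : Y j, q j x ∂volume = (μ s).toReal := by
    have hterm : ∀ j, ∫ x : Y j, q j x ∂volume
        = if j = k then (μ s).toReal else 1 := by
      intro j
      rw [hJq]
      by_cases hj : j = k
      · subst hj
        rw [if_pos rfl]
        have hrw : q j = e := by funext x; simp [hq]
        rw [hrw]; exact he_integral
      · rw [if_neg hj]
        have hrw : q j = fun _ => (1 : ℝ) := by funext x; simp [hq, if_neg hj]
        rw [hrw, integral_const]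
        simp
    rw [Finset.prod_congr rfl (fun j _ => hterm j)]
    simp
  have hsum_terms : ∑ l, ∏ j, ∫ x : Y j, p l j x ∂volume
      = (∫ x in s, ξ k x ∂μ) + ((n : ℝ) - 1) * ((μ s).toReal * c) := by
    rw [← Finset.add_sum_erase _ _ (Finset.mem_univ k)]
    congr 1
    · -- term l = k
      refine (Finset.prod_eq_single_of_mem k (Finset.mem_univ k) ?_).trans hJk
      intro j _ hj
      exact hJ1 k j hj hj
    · -- terms l ≠ k
      have hterm : ∀ l ∈ Finset.univ.erase k,
          ∏ j, ∫ x : Y j, p l j x ∂volume = (μ s).toReal * c := by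
        intro l hl
        have hlk : l ≠ k := Finset.ne_of_mem_erase hl
        have hprodrw : ∀ j, ∫ x : Y j, p l j x ∂volume
            = (if j = k then (μ s).toReal else 1) * (if j = l then c else 1) := by
          intro j
          by_cases hjk : j = k
          · subst hjk
            rw [if_pos rfl, if_neg (Ne.symm hlk), mul_one]
            exact hJe l hlk
          · by_cases hjl : j = l
            · subst hjl
              rw [if_neg hjk, if_pos rfl, one_mul]
              exact hJl j hlk
            · rw [if_neg hjk, if_neg hjl, mul_one]
              exact hJ1 l j hjk hjl
        rw [Finset.prod_congr rfl (fun j _ => hprodrw j), Finset.prod_mul_distrib]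
        congr 1
        · simp [Finset.prod_ite_eq']
        · simp [Finset.prod_ite_eq']
      rw [Finset.sum_congr rfl hterm, Finset.sum_const, Finset.card_erase_of_mem
        (Finset.mem_univ k), Finset.card_univ, Fintype.card_fin, nsmul_eq_mul]
      congr 1
      rw [Nat.cast_sub hn]
      simp
  have hfπ : ∫ x, f x ∂π = ∫ x in s, ξ k x ∂μ := by
    rw [hsum_val, hqprod_val, hsum_terms]
    ring
  -- compute ∫ f dπ via transfer
  have hdiag_prod : ∀ l (ω : Ω), ∏ j, p l j (diag ω j) = e ω * ξ l ω := by
    intro l ω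
    have h1 : ∀ j, p l j (diag ω j) = (if j = k then e ω else 1) *
        (if j = l then ξ l ω else 1) := by
      intro j
      simp [hp, hq, hdiagdef]
    rw [Finset.prod_congr rfl (fun j _ => h1 j), Finset.prod_mul_distrib]
    congr 1
    · simp [Finset.prod_ite_eq']
    · simp [Finset.prod_ite_eq']
  have hdiag_q : ∀ ω : Ω, ∏ j, q j (diag ω j) = e ω := by
    intro ω
    have h1 : ∀ j, q j (diag ω j) = if j = k then e ω else 1 := by
      intro j; simp [hq, hdiagdef]
    rw [Finset.prod_congr rfl (fun j _ => h1 j)]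
    simp [Finset.prod_ite_eq']
  have hfμ : ∫ x, f x ∂π = ∫ x in s, ξ₀ x ∂μ := by
    rw [transfer f hfmeas]
    have hptw : ∀ ω, G ω * f (diag ω) = s.indicator ξ₀ ω := by
      intro ω
      rw [hf]
      simp only
      rw [Finset.sum_congr rfl (fun l _ => hdiag_prod l ω), hdiag_q]
      by_cases hx : ω ∈ s
      · have heω : e ω = 1 := by rw [he, indicator_of_mem hx]
        rw [heω, indicator_of_mem hx]
        simp only [hξ₀def, hη, one_mul, mul_one]
      · have heω : e ω = 0 := by rw [he, indicator_of_notMem hx]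
        rw [heω, indicator_of_notMem hx]
        simp
    rw [integral_congr_ae (Filter.Eventually.of_forall hptw), integral_indicator hms]
  exact hfπ.symm.trans hfμ

/-- if `μ(A 1 ∩ ... ∩ A n) ≥ α μ(A 1) ⋯ μ(A n)` for some `α > 0`
and all `A k ∈ 𝓕 k`, then the collection of sub-σ-algebras `𝓕 1, ..., 𝓕 n`
possesses the inverse marginal property. -/
theorem stmt_19 {Ω : Type*} [m0 : MeasurableSpace Ω] (μ : Measure Ω)
    [IsProbabilityMeasure μ] {n : ℕ}
    (F : Fin n → MeasurableSpace Ω) (hF : ∀ k, F k ≤ m0)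
    (α : ℝ) (hα : 0 < α)
    (hdom : ∀ A : Fin n → Set Ω, (∀ k, MeasurableSet[F k] (A k)) →
      ENNReal.ofReal α * ∏ k, μ (A k) ≤ μ (⋂ k, A k)) :
    ∀ ξ : Fin n → Ω → ℝ,
      (∀ k, Measurable[F k] (ξ k)) →
      (∀ k, MemLp (ξ k) 2 μ) →
      (∀ k l, ∫ ω, ξ k ω ∂μ = ∫ ω, ξ l ω ∂μ) →
      ∃ ξ₀ : Ω → ℝ, MemLp ξ₀ 2 μ ∧
        ∀ k, MeasureTheory.condExp (F k) μ ξ₀ =ᵐ[μ] ξ k := by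
  intro ξ hξm hξ2 hmean
  rcases Nat.eq_zero_or_pos n with hn | hn
  · subst hn
    exact ⟨0, MemLp.zero, fun k => k.elim0⟩
  · exact stmt_19_main μ hn F hF α hα hdom ξ hξm hξ2 hmean
end
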